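/- arXiv:1302.5281 — 7 statements merged into one kernel-verified Lean document; each statement's English description precedes it below -/
import Mathlib

section
/- Let λ ∈ (1,2] and β ∈ (0,1) be real numbers, and define f(α) = (1/(λ−1))·ln( α^λ·β^{1−λ} + (1−α)^λ·(β⁻¹−β)^{1−λ} ), where all powers are real powers. Then f is monotone nondecreasing on the interval [β,1]: for all real α₁, α₂ with β ≤ α₁ ≤ α₂ ≤ 1, f(α₁) ≤ f(α₂). (This is Property 2 of the quantity 𝔻_λ(α‖β).) -/
/-- Property 2: monotonicity of the binary Rényi quantity `𝔻_λ(α‖β)` in `α`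
on the interval `[β, 1]`, for `λ ∈ (1,2]` and `β ∈ (0,1)`. -/
theorem binD_monotoneOn (lam β : ℝ) (hlam₁ : 1 < lam) (hlam₂ : lam ≤ 2)
    (hβ₀ : 0 < β) (hβ₁ : β < 1) :
    MonotoneOn (fun α : ℝ =>
      (1 / (lam - 1)) *
        Real.log (α ^ lam * β ^ (1 - lam) + (1 - α) ^ lam * (β⁻¹ - β) ^ (1 - lam)))
      (Set.Icc β 1) := by
  set d : ℝ := β⁻¹ - β with hd_def
  have hd : 0 < d := by
    have h : d = (1 - β ^ 2) / β := by rw [hd_def]; field_simp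
    rw [h]
    have : 0 < 1 - β ^ 2 := by nlinarith
    positivity
  set g : ℝ → ℝ := fun α => α ^ lam * β ^ (1 - lam) + (1 - α) ^ lam * d ^ (1 - lam)
    with hg_def
  -- derivative of g
  have hderiv : ∀ α : ℝ, HasDerivAt g
      (lam * α ^ (lam - 1) * β ^ (1 - lam) +
        (-1 * lam * (1 - α) ^ (lam - 1)) * d ^ (1 - lam)) α := by
    intro α
    have h1 : HasDerivAt (fun x : ℝ => x ^ lam) (lam * α ^ (lam - 1)) α :=
      Real.hasDerivAt_rpow_const (Or.inr hlam₁.le)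
    have h2 : HasDerivAt (fun x : ℝ => 1 - x) (-1) α := (hasDerivAt_id α).const_sub 1
    have h3 : HasDerivAt (fun x : ℝ => (1 - x) ^ lam)
        (-1 * lam * (1 - α) ^ (lam - 1)) α :=
      h2.rpow_const (Or.inr hlam₁.le)
    exact (h1.mul_const _).add (h3.mul_const _)
  -- g is monotone on [β, 1]
  have hgmono : MonotoneOn g (Set.Icc β 1) := by
    apply monotoneOn_of_deriv_nonneg (convex_Icc β 1)
    · exact fun x _ => ((hderiv x).continuousAt).continuousWithinAt
    · exact fun x _ => ((hderiv x).differentiableAt).differentiableWithinAt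
    · intro x hx
      rw [interior_Icc] at hx
      rw [(hderiv x).deriv]
      have hx0 : 0 < x := lt_trans hβ₀ hx.1
      have hx1 : 0 < 1 - x := by linarith [hx.2]
      -- key: (1-x)^(lam-1) * d^(1-lam) ≤ x^(lam-1) * β^(1-lam)
      have key : (1 - x) ^ (lam - 1) * d ^ (1 - lam) ≤ x ^ (lam - 1) * β ^ (1 - lam) := by
        have h1 : (1 : ℝ) - lam = -(lam - 1) := by ring
        rw [h1, Real.rpow_neg hβ₀.le, Real.rpow_neg hd.le]
        have e1 : x ^ (lam - 1) * (β ^ (lam - 1))⁻¹ = (x / β) ^ (lam - 1) := by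
          rw [Real.div_rpow hx0.le hβ₀.le]; ring
        have e2 : (1 - x) ^ (lam - 1) * (d ^ (lam - 1))⁻¹ = ((1 - x) / d) ^ (lam - 1) := by
          rw [Real.div_rpow hx1.le hd.le]; ring
        rw [e1, e2]
        apply Real.rpow_le_rpow (by positivity) _ (by linarith)
        rw [div_le_div_iff₀ hd hβ₀]
        have hdβ : d * β = 1 - β ^ 2 := by rw [hd_def]; field_simp
        rw [← mul_le_mul_iff_of_pos_right hβ₀, mul_assoc x, hdβ]
        nlinarith [hx.1, hβ₀, hβ₁]
      have hlam0 : 0 < lam := by linarith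
      nlinarith [key]
  -- conclude
  intro a ha b hb hab
  have hga : 0 < g a := by
    have ha0 : 0 < a := lt_of_lt_of_le hβ₀ ha.1
    have ha1 : 0 ≤ 1 - a := by linarith [ha.2]
    have t1 : 0 < a ^ lam * β ^ (1 - lam) := by positivity
    have t2 : 0 ≤ (1 - a) ^ lam * d ^ (1 - lam) := by positivity
    simp only [hg_def]
    linarith
  have hle : g a ≤ g b := hgmono ha hb hab
  have hc : 0 ≤ 1 / (lam - 1) := by
    have : 0 < lam - 1 := by linarith
    positivity
  exact mul_le_mul_of_nonneg_left (Real.log_le_log hga hle) hc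
end

section
/- (Quantum Sibson identity.) Let A, B be nonempty finite types, λ > 1 a real number, ρ a density matrix indexed by A×B, and σ a positive definite density matrix indexed by B. Set T := Tr[ (Tr_A(ρ^λ))^{1/λ} ] (which is a positive real number) and σ* := (Tr_A(ρ^λ))^{1/λ} / T. Then D_λ(ρ ‖ 1_A⊗σ) = D_λ(σ* ‖ σ) + (λ/(λ−1))·ln T. -/
open scoped Kronecker
open Matrix
open scoped ComplexOrder

/-- Apply a real function to a Hermitian matrix via the functional calculus
(spectral decomposition); returns 0 for non-Hermitian input. -/
noncomputable def matFun {n : Type*} [Fintype n] [DecidableEq n]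
    (M : Matrix n n ℂ) (f : ℝ → ℝ) : Matrix n n ℂ :=
  if h : M.IsHermitian then
    (h.eigenvectorUnitary : Matrix n n ℂ) *
      Matrix.diagonal (fun i => (f (h.eigenvalues i) : ℂ)) *
      (star (h.eigenvectorUnitary : Matrix n n ℂ))
  else 0

/-- Real power of a (Hermitian positive semidefinite) matrix, with the
convention `0 ^ t = 0` for every real `t`. -/
noncomputable def mpow {n : Type*} [Fintype n] [DecidableEq n]
    (M : Matrix n n ℂ) (t : ℝ) : Matrix n n ℂ :=
  matFun M (fun x => if x = 0 then 0 else x ^ t)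

/-- Real part of the trace. -/
noncomputable def trR {n : Type*} [Fintype n] (M : Matrix n n ℂ) : ℝ :=
  (Matrix.trace M).re

/-- Partial trace over the first tensor factor. -/
noncomputable def ptrA {A B : Type*} [Fintype A]
    (M : Matrix (A × B) (A × B) ℂ) : Matrix B B ℂ :=
  Matrix.of fun b b' => ∑ a : A, M (a, b) (a, b')

/-- Quantum Rényi divergence of order `lam`. -/
noncomputable def renyiD {n : Type*} [Fintype n] [DecidableEq n]
    (lam : ℝ) (X Y : Matrix n n ℂ) : ℝ :=
  (1 / (lam - 1)) * Real.log (trR (mpow X lam * mpow Y (1 - lam)))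

/-- The quantity `K_lam(A⟩B)_ρ`: infimum over positive definite density
matrices `σ` on `B` of `D_lam(ρ ‖ 1_A ⊗ σ)`. -/
noncomputable def Kinf {A B : Type*} [Fintype A] [Fintype B]
    [DecidableEq A] [DecidableEq B]
    (lam : ℝ) (ρ : Matrix (A × B) (A × B) ℂ) : ℝ :=
  ⨅ σ : {σ : Matrix B B ℂ // σ.PosDef ∧ σ.trace = 1},
    renyiD lam ρ ((1 : Matrix A A ℂ) ⊗ₖ (σ : Matrix B B ℂ))

/-- The CPTP map determined by a finite family of Kraus operators. -/
noncomputable def krausMap {ι n m : Type*} [Fintype ι] [Fintype n] [Fintype m]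
    (K : ι → Matrix m n ℂ) (X : Matrix n n ℂ) : Matrix m m ℂ :=
  ∑ j, K j * X * (K j)ᴴ

/-- Trace of the positive part of a Hermitian matrix. -/
noncomputable def trPos {n : Type*} [Fintype n] [DecidableEq n]
    (X : Matrix n n ℂ) : ℝ :=
  if h : X.IsHermitian then ∑ i, max (h.eigenvalues i) 0 else 0

/-- Binary Rényi quantity `𝔻_lam(α‖β)`. -/
noncomputable def binD (lam α β : ℝ) : ℝ :=
  (1 / (lam - 1)) *
    Real.log (α ^ lam * β ^ (1 - lam) + (1 - α) ^ lam * (β⁻¹ - β) ^ (1 - lam))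

section Auxiliary

open Polynomial

variable {n : Type*} [Fintype n] [DecidableEq n]

private lemma aeval_diagonal' (c : n → ℂ) (p : ℂ[X]) :
    aeval (diagonal c) p = diagonal (fun i => p.eval (c i)) := by
  have h1 : diagonal c = Matrix.diagonalAlgHom (n := n) (α := ℂ) ℂ c := rfl
  have h2 : aeval c p = fun i => p.eval (c i) := by
    funext i
    exact congrFun (Polynomial.coe_aeval_eq_eval _) p ▸
      (aeval_algHom_apply (Pi.evalAlgHom ℂ (fun _ : n => ℂ) i) c p).symm
  rw [h1, aeval_algHom_apply, h2]
  rfl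

private lemma aeval_unitary_conj (U : Matrix n n ℂ) (hU : U ∈ Matrix.unitaryGroup n ℂ)
    (D : Matrix n n ℂ) (p : ℂ[X]) :
    aeval (U * D * star U) p = U * aeval D p * star U := by
  have h1 : star U * U = 1 := mem_unitaryGroup_iff'.mp hU
  have h2 : U * star U = 1 := mem_unitaryGroup_iff.mp hU
  induction p using Polynomial.induction_on' with
  | add p q hp hq => simp [hp, hq, Matrix.mul_add, Matrix.add_mul]
  | monomial k a =>
    have hk : (U * D * star U) ^ k = U * D ^ k * star U := by
      induction k with
      | zero => simp [h2]
      | succ m ih =>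
        rw [pow_succ, pow_succ, ih,
          show U * D ^ m * star U * (U * D * star U) = U * D ^ m * (star U * U) * (D * star U) by
            simp only [Matrix.mul_assoc], h1, mul_one]
        simp only [Matrix.mul_assoc]
    simp only [aeval_monomial, hk, Algebra.algebraMap_eq_smul_one]
    simp [Matrix.smul_mul, Matrix.mul_smul, smul_smul]

private lemma herm_conj {U : Matrix n n ℂ} (_hU : U ∈ Matrix.unitaryGroup n ℂ) (d : n → ℝ) :
    (U * diagonal (fun i => (d i : ℂ)) * star U).IsHermitian := by
  have hst : star (fun i => (d i : ℂ)) = fun i => (d i : ℂ) := by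
    funext i; simp [Pi.star_apply, Complex.conj_ofReal]
  unfold Matrix.IsHermitian
  simp [Matrix.conjTranspose_mul, Matrix.star_eq_conjTranspose, Matrix.diagonal_conjTranspose,
    hst, Matrix.mul_assoc]

private lemma herm_decomp {M : Matrix n n ℂ} (h : M.IsHermitian) :
    M = (h.eigenvectorUnitary : Matrix n n ℂ) *
      diagonal (fun i => (h.eigenvalues i : ℂ)) *
      star (h.eigenvectorUnitary : Matrix n n ℂ) := by
  convert h.spectral_theorem using 3
  simp only [Unitary.conjStarAlgAut_apply]
  rfl

/-- Key uniqueness lemma for the functional calculus: it can be computed from any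
unitary diagonalization. -/
private lemma matFun_conj {M U : Matrix n n ℂ} (hU : U ∈ Matrix.unitaryGroup n ℂ) {d : n → ℝ}
    (hM : M = U * diagonal (fun i => (d i : ℂ)) * star U) (f : ℝ → ℝ) :
    matFun M f = U * diagonal (fun i => (f (d i) : ℂ)) * star U := by
  have hH : M.IsHermitian := hM ▸ herm_conj hU d
  set V : Matrix n n ℂ := (hH.eigenvectorUnitary : Matrix n n ℂ) with hVdef
  have hV : V ∈ Matrix.unitaryGroup n ℂ := hH.eigenvectorUnitary.2
  set e : n → ℝ := hH.eigenvalues with hedef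
  have hspec : M = V * diagonal (fun i => (e i : ℂ)) * star V := herm_decomp hH
  set s : Finset ℝ := Finset.univ.image d ∪ Finset.univ.image e with hsdef
  set p : Polynomial ℂ := Lagrange.interpolate s (fun x : ℝ => (x : ℂ))
      (fun x => ((f x : ℝ) : ℂ)) with hpdef
  have hinj : Set.InjOn (fun x : ℝ => (x : ℂ)) s := fun a _ b _ h =>
    Complex.ofReal_inj.mp h
  have heval : ∀ x ∈ s, p.eval (x : ℂ) = (f x : ℂ) := fun x hx =>
    Lagrange.eval_interpolate_at_node _ hinj hx
  have hd : ∀ i, (d i) ∈ s := fun i =>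
    Finset.mem_union_left _ (Finset.mem_image_of_mem _ (Finset.mem_univ i))
  have he : ∀ i, (e i) ∈ s := fun i =>
    Finset.mem_union_right _ (Finset.mem_image_of_mem _ (Finset.mem_univ i))
  have key1 : aeval M p = V * diagonal (fun i => (f (e i) : ℂ)) * star V := by
    rw [hspec, aeval_unitary_conj _ hV, aeval_diagonal']
    have : (fun i => p.eval ((e i : ℝ) : ℂ)) = fun i => ((f (e i) : ℝ) : ℂ) :=
      funext fun i => heval _ (he i)
    rw [this]
  have key2 : aeval M p = U * diagonal (fun i => (f (d i) : ℂ)) * star U := by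
    rw [hM, aeval_unitary_conj _ hU, aeval_diagonal']
    have : (fun i => p.eval ((d i : ℝ) : ℂ)) = fun i => ((f (d i) : ℝ) : ℂ) :=
      funext fun i => heval _ (hd i)
    rw [this]
  rw [matFun, dif_pos hH, ← hVdef, ← hedef, ← key1, key2]

private lemma conj_posSemidef {U : Matrix n n ℂ} (hU : U ∈ Matrix.unitaryGroup n ℂ)
    {v : n → ℝ} (hv : ∀ i, 0 ≤ v i) :
    (U * diagonal (fun i => (v i : ℂ)) * star U).PosSemidef := by
  have h := (Matrix.PosSemidef.diagonal (d := fun i => (v i : ℂ))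
    (fun i => Complex.zero_le_real.mpr (hv i))).mul_mul_conjTranspose_same U
  rwa [← Matrix.star_eq_conjTranspose] at h

private lemma conj_posDef {U : Matrix n n ℂ} (hU : U ∈ Matrix.unitaryGroup n ℂ)
    {v : n → ℝ} (hv : ∀ i, 0 < v i) :
    (U * diagonal (fun i => (v i : ℂ)) * star U).PosDef := by
  refine Matrix.PosDef.of_dotProduct_mulVec_pos (herm_conj hU v) fun x hx => ?_
  have h2 : U * star U = 1 := mem_unitaryGroup_iff.mp hU
  set y : n → ℂ := star U *ᵥ x with hydef
  have hyx : U *ᵥ y = x := by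
    rw [hydef, Matrix.mulVec_mulVec, h2, Matrix.one_mulVec]
  have hy : y ≠ 0 := fun h => hx (by rw [← hyx, h, Matrix.mulVec_zero])
  have hform : dotProduct (star x) ((U * diagonal (fun i => (v i : ℂ)) * star U) *ᵥ x)
      = dotProduct (star y) ((diagonal (fun i => (v i : ℂ))) *ᵥ y) := by
    rw [← Matrix.mulVec_mulVec, ← Matrix.mulVec_mulVec, Matrix.dotProduct_mulVec (star x)]
    congr 1
    rw [hydef, Matrix.star_mulVec, Matrix.star_eq_conjTranspose, Matrix.conjTranspose_conjTranspose]
  rw [hform]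
  have hterm : ∀ i, (star y) i * ((diagonal (fun i => (v i : ℂ)) *ᵥ y) i)
      = ((v i * Complex.normSq (y i) : ℝ) : ℂ) := by
    intro i
    rw [Pi.star_apply, Matrix.mulVec_diagonal]
    calc star (y i) * ((v i : ℂ) * y i) = (v i : ℂ) * (star (y i) * y i) := by ring
      _ = (v i : ℂ) * ((Complex.normSq (y i) : ℝ) : ℂ) := by
          rw [Complex.star_def, ← Complex.normSq_eq_conj_mul_self]
      _ = ((v i * Complex.normSq (y i) : ℝ) : ℂ) := by push_cast; ring
  have hsum : dotProduct (star y) ((diagonal (fun i => (v i : ℂ))) *ᵥ y)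
      = ((∑ i, v i * Complex.normSq (y i) : ℝ) : ℂ) := by
    rw [dotProduct, Complex.ofReal_sum]
    exact Finset.sum_congr rfl fun i _ => hterm i
  rw [hsum]
  rw [Complex.zero_lt_real]
  obtain ⟨i0, hi0⟩ := Function.ne_iff.mp hy
  refine Finset.sum_pos' (fun i _ => mul_nonneg (hv i).le (Complex.normSq_nonneg _))
    ⟨i0, Finset.mem_univ i0, mul_pos (hv i0) ?_⟩
  simpa [Complex.normSq_pos] using hi0

private lemma trR_conj {U : Matrix n n ℂ} (hU : U ∈ Matrix.unitaryGroup n ℂ) (v : n → ℝ) :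
    trR (U * diagonal (fun i => (v i : ℂ)) * star U) = ∑ i, v i := by
  have h1 : star U * U = 1 := mem_unitaryGroup_iff'.mp hU
  have : Matrix.trace (U * diagonal (fun i => (v i : ℂ)) * star U)
      = Matrix.trace (diagonal (fun i => (v i : ℂ))) := by
    rw [Matrix.trace_mul_cycle, h1, Matrix.one_mul]
  rw [trR, this, Matrix.trace_diagonal, ← Complex.ofReal_sum, Complex.ofReal_re]

private lemma conj_diag_smul {U : Matrix n n ℂ} (r : ℝ) (v : n → ℝ) :
    U * diagonal (fun i => ((r * v i : ℝ) : ℂ)) * star U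
      = ((r : ℝ) : ℂ) • (U * diagonal (fun i => (v i : ℂ)) * star U) := by
  have h : diagonal (fun i => ((r * v i : ℝ) : ℂ)) = ((r : ℝ) : ℂ) • diagonal (fun i => (v i : ℂ)) := by
    ext i j
    by_cases hij : i = j
    · subst hij
      simp [Complex.ofReal_mul]
    · simp [Matrix.diagonal_apply_ne _ hij, hij]
  rw [h, Matrix.mul_smul, Matrix.smul_mul]

end Auxiliary

section Kron

variable {A B : Type*} [Fintype A] [Fintype B] [DecidableEq A] [DecidableEq B]

private lemma star_one_kron (V : Matrix B B ℂ) :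
    star ((1 : Matrix A A ℂ) ⊗ₖ V) = (1 : Matrix A A ℂ) ⊗ₖ star V := by
  ext ⟨a, b⟩ ⟨a', b'⟩
  simp only [Matrix.star_eq_conjTranspose, Matrix.conjTranspose_apply,
    Matrix.kroneckerMap_apply, Matrix.one_apply]
  by_cases h : a = a' <;> simp [h, eq_comm]

private lemma one_kron_mul (X Y : Matrix B B ℂ) :
    ((1 : Matrix A A ℂ) ⊗ₖ X) * ((1 : Matrix A A ℂ) ⊗ₖ Y)
      = (1 : Matrix A A ℂ) ⊗ₖ (X * Y) := by
  rw [← Matrix.mul_kronecker_mul, Matrix.one_mul]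

private lemma one_kron_unitary {V : Matrix B B ℂ} (hV : V ∈ Matrix.unitaryGroup B ℂ) :
    (1 : Matrix A A ℂ) ⊗ₖ V ∈ Matrix.unitaryGroup (A × B) ℂ := by
  have h1 : star V * V = 1 := mem_unitaryGroup_iff'.mp hV
  rw [Matrix.mem_unitaryGroup_iff']
  rw [star_one_kron, one_kron_mul, h1, Matrix.one_kronecker_one]

private lemma one_kron_diagonal (c : B → ℂ) :
    (1 : Matrix A A ℂ) ⊗ₖ diagonal c = diagonal (fun p : A × B => c p.2) := by
  rw [← Matrix.diagonal_one, Matrix.diagonal_kronecker_diagonal]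
  simp

private lemma matFun_one_kron {σ : Matrix B B ℂ} (hσ : σ.IsHermitian) (f : ℝ → ℝ) :
    matFun ((1 : Matrix A A ℂ) ⊗ₖ σ) f = (1 : Matrix A A ℂ) ⊗ₖ matFun σ f := by
  set V : Matrix B B ℂ := (hσ.eigenvectorUnitary : Matrix B B ℂ) with hVdef
  have hV : V ∈ Matrix.unitaryGroup B ℂ := hσ.eigenvectorUnitary.2
  set e : B → ℝ := hσ.eigenvalues with hedef
  have hdec : σ = V * diagonal (fun i => (e i : ℂ)) * star V := herm_decomp hσ
  have hkron : ∀ (D : Matrix B B ℂ),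
      (1 : Matrix A A ℂ) ⊗ₖ (V * D * star V)
        = ((1 : Matrix A A ℂ) ⊗ₖ V) * ((1 : Matrix A A ℂ) ⊗ₖ D) *
          star ((1 : Matrix A A ℂ) ⊗ₖ V) := by
    intro D
    rw [star_one_kron, one_kron_mul, one_kron_mul]
  have hdec2 : (1 : Matrix A A ℂ) ⊗ₖ σ
      = ((1 : Matrix A A ℂ) ⊗ₖ V) * diagonal (fun p : A × B => (e p.2 : ℂ)) *
        star ((1 : Matrix A A ℂ) ⊗ₖ V) := by
    conv_lhs => rw [hdec]
    rw [hkron, one_kron_diagonal]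
  rw [matFun_conj (one_kron_unitary hV) hdec2 f, matFun_conj hV hdec f,
    ← one_kron_diagonal (fun b => (f (e b) : ℂ)), ← hkron]

end Kron

section PtrA

variable {A B : Type*} [Fintype A] [Fintype B] [DecidableEq A] [DecidableEq B]

private lemma trace_mul_one_kron (P : Matrix (A × B) (A × B) ℂ) (N : Matrix B B ℂ) :
    Matrix.trace (P * ((1 : Matrix A A ℂ) ⊗ₖ N)) = Matrix.trace (ptrA P * N) := by
  have hentry : ∀ a b, (P * ((1 : Matrix A A ℂ) ⊗ₖ N)) (a, b) (a, b)
      = ∑ b', P (a, b) (a, b') * N b' b := by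
    intro a b
    rw [Matrix.mul_apply, Fintype.sum_prod_type]
    rw [Finset.sum_comm]
    congr 1
    funext b'
    simp [Matrix.kroneckerMap_apply, Matrix.one_apply, mul_comm, mul_ite, ite_mul,
      Finset.sum_ite_eq']
  rw [Matrix.trace, Matrix.trace]
  simp only [Matrix.diag]
  rw [Fintype.sum_prod_type]
  simp only [hentry, Matrix.mul_apply, ptrA, Matrix.of_apply]
  rw [Finset.sum_comm]
  congr 1
  funext b
  rw [Finset.sum_comm]
  congr 1
  funext b'
  rw [Finset.sum_mul]

private lemma ptrA_eq_sum (P : Matrix (A × B) (A × B) ℂ) :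
    ptrA P = ∑ a : A, P.submatrix (fun b => (a, b)) (fun b => (a, b)) := by
  ext b b'
  rw [Matrix.sum_apply]
  rfl

private lemma ptrA_posSemidef {P : Matrix (A × B) (A × B) ℂ} (hP : P.PosSemidef) :
    (ptrA P).PosSemidef := by
  rw [ptrA_eq_sum]
  refine Finset.sum_induction _ Matrix.PosSemidef (fun a b ha hb => ha.add hb)
    Matrix.PosSemidef.zero (fun a _ => hP.submatrix _)

private lemma trace_ptrA (P : Matrix (A × B) (A × B) ℂ) :
    Matrix.trace (ptrA P) = Matrix.trace P := by
  rw [Matrix.trace, Matrix.trace, Fintype.sum_prod_type]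
  simp only [Matrix.diag, ptrA, Matrix.of_apply]
  rw [Finset.sum_comm]

end PtrA

/-- Quantum Sibson identity:
`D_λ(ρ ‖ 1_A⊗σ) = D_λ(σ* ‖ σ) + (λ/(λ−1))·ln T` where
`T = Tr[(Tr_A ρ^λ)^{1/λ}]` and `σ* = (Tr_A ρ^λ)^{1/λ}/T`; moreover `T > 0`. -/
theorem quantum_sibson_identity
    {A B : Type*} [Fintype A] [Fintype B] [DecidableEq A] [DecidableEq B]
    [Nonempty A] [Nonempty B]
    (lam : ℝ) (hlam : 1 < lam)
    (ρ : Matrix (A × B) (A × B) ℂ) (hρ : ρ.PosSemidef ∧ ρ.trace = 1)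
    (σ : Matrix B B ℂ) (hσ : σ.PosDef ∧ σ.trace = 1)
    (T : ℝ) (hT : T = trR (mpow (ptrA (mpow ρ lam)) (1 / lam)))
    (σstar : Matrix B B ℂ)
    (hσstar : σstar = (T : ℂ)⁻¹ • mpow (ptrA (mpow ρ lam)) (1 / lam)) :
    0 < T ∧
      renyiD lam ρ ((1 : Matrix A A ℂ) ⊗ₖ σ) =
        renyiD lam σstar σ + (lam / (lam - 1)) * Real.log T := by
  obtain ⟨hρpsd, hρtr⟩ := hρ
  obtain ⟨hσpd, hσtr⟩ := hσ
  have hlam0 : (0 : ℝ) < lam := lt_trans one_pos hlam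
  have hlamne : lam ≠ 0 := ne_of_gt hlam0
  have hlam1 : lam - 1 ≠ 0 := sub_ne_zero.mpr (ne_of_gt hlam)
  -- ρ decomposition
  have hρH : ρ.IsHermitian := hρpsd.1
  set W0 : Matrix (A × B) (A × B) ℂ := (hρH.eigenvectorUnitary : Matrix (A × B) (A × B) ℂ)
    with hW0def
  have hW0 : W0 ∈ Matrix.unitaryGroup (A × B) ℂ := hρH.eigenvectorUnitary.2
  set eρ : A × B → ℝ := hρH.eigenvalues with heρdef
  have hdecρ : ρ = W0 * diagonal (fun i => (eρ i : ℂ)) * star W0 := herm_decomp hρH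
  have heρ0 : ∀ i, 0 ≤ eρ i := fun i => hρpsd.eigenvalues_nonneg i
  have hmρ : mpow ρ lam
      = W0 * diagonal (fun i => ((if eρ i = 0 then 0 else eρ i ^ lam : ℝ) : ℂ)) * star W0 :=
    matFun_conj hW0 hdecρ _
  have hpowpsd : (mpow ρ lam).PosSemidef := by
    rw [hmρ]
    refine conj_posSemidef hW0 (fun i => ?_)
    split
    · exact le_refl 0
    · exact Real.rpow_nonneg (heρ0 i) lam
  -- M = ptrA (mpow ρ lam)
  set M : Matrix B B ℂ := ptrA (mpow ρ lam) with hMdef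
  have hMpsd : M.PosSemidef := ptrA_posSemidef hpowpsd
  have hMH : M.IsHermitian := hMpsd.1
  set W : Matrix B B ℂ := (hMH.eigenvectorUnitary : Matrix B B ℂ) with hWdef
  have hW : W ∈ Matrix.unitaryGroup B ℂ := hMH.eigenvectorUnitary.2
  set eM : B → ℝ := hMH.eigenvalues with heMdef
  have hdecM : M = W * diagonal (fun i => (eM i : ℂ)) * star W := herm_decomp hMH
  have heM0 : ∀ i, 0 ≤ eM i := fun i => hMpsd.eigenvalues_nonneg i
  -- sum of eρ equals 1
  have htr1 : ∑ i, eρ i = 1 := by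
    have h1 := trR_conj hW0 eρ
    rw [← hdecρ] at h1
    rw [← h1, trR, hρtr]
    rfl
  have hexρ : ∃ j, 0 < eρ j := by
    by_contra h
    push_neg at h
    have : ∑ i, eρ i ≤ 0 := Finset.sum_nonpos fun i _ => h i
    linarith
  obtain ⟨j0, hj0⟩ := hexρ
  -- sum of eM is positive
  have hMsum : ∑ i, eM i = ∑ j, (if eρ j = 0 then 0 else eρ j ^ lam) := by
    have h1 := trR_conj hW eM
    rw [← hdecM] at h1
    have h2 := trR_conj hW0 (fun j => if eρ j = 0 then (0 : ℝ) else eρ j ^ lam)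
    rw [← hmρ] at h2
    have h3 : Matrix.trace M = Matrix.trace (mpow ρ lam) := trace_ptrA _
    rw [← h1, ← h2, trR, trR, h3]
  have hexM : ∃ i, 0 < eM i := by
    have hpos : 0 < ∑ j, (if eρ j = 0 then (0 : ℝ) else eρ j ^ lam) := by
      refine Finset.sum_pos' (fun j _ => ?_) ⟨j0, Finset.mem_univ j0, ?_⟩
      · split
        · exact le_refl 0
        · exact Real.rpow_nonneg (heρ0 j) lam
      · rw [if_neg (ne_of_gt hj0)]
        exact Real.rpow_pos_of_pos hj0 lam
    by_contra h
    push_neg at h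
    have : ∑ i, eM i ≤ 0 := Finset.sum_nonpos fun i _ => h i
    rw [hMsum] at this
    linarith
  obtain ⟨i0, hi0⟩ := hexM
  -- T
  have hmM : mpow M (1 / lam)
      = W * diagonal (fun i => ((if eM i = 0 then 0 else eM i ^ (1 / lam) : ℝ) : ℂ)) * star W :=
    matFun_conj hW hdecM _
  have hTval : T = ∑ i, (if eM i = 0 then (0 : ℝ) else eM i ^ (1 / lam)) := by
    rw [hT, hmM, trR_conj hW]
  have hTpos : 0 < T := by
    rw [hTval]
    refine Finset.sum_pos' (fun i _ => ?_) ⟨i0, Finset.mem_univ i0, ?_⟩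
    · split
      · exact le_refl 0
      · exact Real.rpow_nonneg (heM0 i) _
    · rw [if_neg (ne_of_gt hi0)]
      exact Real.rpow_pos_of_pos hi0 _
  -- σ decomposition
  have hσH : σ.IsHermitian := hσpd.1
  set V : Matrix B B ℂ := (hσH.eigenvectorUnitary : Matrix B B ℂ) with hVdef
  have hV : V ∈ Matrix.unitaryGroup B ℂ := hσH.eigenvectorUnitary.2
  set eσ : B → ℝ := hσH.eigenvalues with heσdef
  have hdecσ : σ = V * diagonal (fun i => (eσ i : ℂ)) * star V := herm_decomp hσH
  have heσpos : ∀ i, 0 < eσ i := fun i => hσpd.eigenvalues_pos i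
  have hmσ : mpow σ (1 - lam)
      = V * diagonal (fun i => ((if eσ i = 0 then 0 else eσ i ^ (1 - lam) : ℝ) : ℂ)) * star V :=
    matFun_conj hV hdecσ _
  set N : Matrix B B ℂ := mpow σ (1 - lam) with hNdef
  have hNpd : N.PosDef := by
    rw [hmσ]
    refine conj_posDef hV (fun i => ?_)
    rw [if_neg (ne_of_gt (heσpos i))]
    exact Real.rpow_pos_of_pos (heσpos i) _
  -- Kronecker power
  have hkron : mpow ((1 : Matrix A A ℂ) ⊗ₖ σ) (1 - lam) = (1 : Matrix A A ℂ) ⊗ₖ N :=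
    matFun_one_kron hσH _
  -- X = trR (M * N)
  set X : ℝ := trR (M * N) with hXdef
  have hX1 : trR (mpow ρ lam * mpow ((1 : Matrix A A ℂ) ⊗ₖ σ) (1 - lam)) = X := by
    rw [hkron, hXdef, trR, trR, trace_mul_one_kron]
  -- X as a sum
  set Q : Matrix B B ℂ := star W * N * W with hQdef
  have htrMN : Matrix.trace (M * N) = ∑ i, (eM i : ℂ) * Q i i := by
    have h1 : M * N = W * (diagonal (fun i => (eM i : ℂ)) * (star W * N)) := by
      conv_lhs => rw [hdecM]
      simp only [Matrix.mul_assoc]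
    have h2 : diagonal (fun i => (eM i : ℂ)) * (star W * N) * W
        = diagonal (fun i => (eM i : ℂ)) * Q := by
      rw [hQdef]
      simp only [Matrix.mul_assoc]
    rw [h1, Matrix.trace_mul_comm, h2, Matrix.trace]
    exact Finset.sum_congr rfl fun i _ => Matrix.diagonal_mul _ _ _ _
  -- positivity of the diagonal of Q
  have hQpos : ∀ i, 0 < (Q i i).re := by
    intro i
    set w : B → ℂ := fun j => W j i with hwdef
    have hwne : w ≠ 0 := by
      intro hw
      have h1 : star W * W = 1 := mem_unitaryGroup_iff'.mp hW
      have h2 : (star W * W) i i = 1 := by rw [h1]; simp [Matrix.one_apply]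
      rw [Matrix.mul_apply] at h2
      have h3 : ∀ j, (star W) i j * W j i = 0 := by
        intro j
        have : w j = 0 := by rw [hw]; rfl
        rw [Matrix.star_apply, show W j i = w j from rfl, this]
        simp
      rw [Finset.sum_congr rfl fun j _ => h3 j] at h2
      simp at h2
    have hdot : Q i i = dotProduct (star w) (N *ᵥ w) := by
      rw [hQdef]
      simp only [Matrix.mul_apply, dotProduct, Matrix.mulVec, Pi.star_apply,
        Matrix.star_apply, Finset.sum_mul, Finset.mul_sum]
      rw [Finset.sum_comm]
      exact Finset.sum_congr rfl fun k _ => Finset.sum_congr rfl fun j _ => by ring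
    have hpos := hNpd.dotProduct_mulVec_pos hwne
    rw [← hdot] at hpos
    rw [Complex.lt_def] at hpos
    simpa using hpos.1
  have hXsum : X = ∑ i, eM i * (Q i i).re := by
    rw [hXdef, trR, htrMN, Complex.re_sum]
    exact Finset.sum_congr rfl fun i _ => Complex.re_ofReal_mul _ _
  have hXpos : 0 < X := by
    rw [hXsum]
    refine Finset.sum_pos' (fun i _ => mul_nonneg (heM0 i) (le_of_lt (hQpos i)))
      ⟨i0, Finset.mem_univ i0, mul_pos hi0 (hQpos i0)⟩
  -- σstar
  set c : ℝ := T⁻¹ with hcdef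
  have hc : 0 < c := inv_pos.mpr hTpos
  have hσstar2 : σstar = W * diagonal
      (fun i => ((c * (if eM i = 0 then 0 else eM i ^ (1 / lam)) : ℝ) : ℂ)) * star W := by
    rw [hσstar, hmM, ← Complex.ofReal_inv, ← hcdef, ← conj_diag_smul]
  have hmσstar : mpow σstar lam = ((c ^ lam : ℝ) : ℂ) • M := by
    have h1 := matFun_conj hW hσstar2 (fun x => if x = 0 then 0 else x ^ lam)
    have h2 : ∀ i, (if (c * (if eM i = 0 then 0 else eM i ^ (1 / lam))) = 0 then (0:ℝ)
        else (c * (if eM i = 0 then 0 else eM i ^ (1 / lam))) ^ lam) = c ^ lam * eM i := by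
      intro i
      by_cases he : eM i = 0
      · simp [he]
      · have heMpos : 0 < eM i := lt_of_le_of_ne (heM0 i) (Ne.symm he)
        rw [if_neg he, if_neg (by positivity)]
        rw [Real.mul_rpow (le_of_lt hc) (Real.rpow_nonneg (heM0 i) _)]
        rw [← Real.rpow_mul (heM0 i), one_div, inv_mul_cancel₀ hlamne, Real.rpow_one]
    have h3 : mpow σstar lam = W * diagonal (fun i => ((c ^ lam * eM i : ℝ) : ℂ)) * star W := by
      show matFun σstar (fun x => if x = 0 then 0 else x ^ lam) = _
      rw [h1]
      simp only [h2]
    rw [h3, conj_diag_smul, ← hdecM]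
  have hY : trR (mpow σstar lam * N) = c ^ lam * X := by
    rw [hmσstar, Matrix.smul_mul, trR, Matrix.trace_smul, smul_eq_mul, Complex.re_ofReal_mul]
    rfl
  -- assembly
  refine ⟨hTpos, ?_⟩
  have hr1 : renyiD lam ρ ((1 : Matrix A A ℂ) ⊗ₖ σ) = (1 / (lam - 1)) * Real.log X := by
    rw [renyiD, hX1]
  have hr2 : renyiD lam σstar σ = (1 / (lam - 1)) * Real.log (c ^ lam * X) := by
    rw [renyiD, ← hNdef, hY]
  rw [hr1, hr2]
  rw [Real.log_mul (ne_of_gt (Real.rpow_pos_of_pos hc lam)) (ne_of_gt hXpos)]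
  rw [Real.log_rpow hc, hcdef, Real.log_inv]
  field_simp
  ring
end

section
/- Let d ≥ 1 and let φ ∈ ℂ^{(Fin d)×(Fin d)} be the maximally entangled unit vector φ(i,j) = (1/√d) if i = j and 0 otherwise. For every real λ > 1, the infimum over positive definite density matrices σ indexed by Fin d of D_λ( |φ⟩⟨φ| ‖ 1⊗σ ) equals ln d. In particular Tr[ (Tr_A(|φ⟩⟨φ|^λ))^{1/λ} ] = d^{(λ−1)/λ}. -/
open scoped Kronecker
open Matrix
open scoped ComplexOrder

section AuxLemmas

variable {n : Type*} [Fintype n] [DecidableEq n]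

lemma eigU_mul_star {M : Matrix n n ℂ} (hM : M.IsHermitian) :
    (hM.eigenvectorUnitary : Matrix n n ℂ) * star (hM.eigenvectorUnitary : Matrix n n ℂ) = 1 :=
  Matrix.mem_unitaryGroup_iff.mp hM.eigenvectorUnitary.2

lemma star_mul_eigU {M : Matrix n n ℂ} (hM : M.IsHermitian) :
    star (hM.eigenvectorUnitary : Matrix n n ℂ) * (hM.eigenvectorUnitary : Matrix n n ℂ) = 1 :=
  Matrix.mem_unitaryGroup_iff'.mp hM.eigenvectorUnitary.2

omit [DecidableEq n] in
lemma trace_vecMulVec_mul (φ ψ : n → ℂ) (M : Matrix n n ℂ) :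
    (vecMulVec φ ψ * M).trace = ψ ⬝ᵥ (M *ᵥ φ) := by
  rw [Matrix.trace_mul_comm]
  simp only [Matrix.trace, Matrix.diag_apply, Matrix.mul_apply, Matrix.vecMulVec_apply,
    Matrix.mulVec, dotProduct, Finset.mul_sum]
  exact Finset.sum_congr rfl fun i _ => Finset.sum_congr rfl fun j _ => by ring

lemma trace_vecMulVec_conj (φ : n → ℂ) (U : Matrix n n ℂ) (c : n → ℝ) :
    (vecMulVec φ (star φ) * (U * Matrix.diagonal (fun i => (c i : ℂ)) * star U)).trace =
      ∑ i, (c i : ℂ) * Complex.normSq ((star U *ᵥ φ) i) := by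
  rw [trace_vecMulVec_mul]
  rw [show (U * Matrix.diagonal (fun i => (c i : ℂ)) * star U) *ᵥ φ
      = U *ᵥ (Matrix.diagonal (fun i => (c i : ℂ)) *ᵥ (star U *ᵥ φ)) by
    rw [Matrix.mulVec_mulVec, Matrix.mulVec_mulVec]]
  rw [Matrix.dotProduct_mulVec]
  have hvm : star φ ᵥ* U = star (star U *ᵥ φ) := by
    rw [Matrix.star_mulVec, Matrix.star_eq_conjTranspose, Matrix.conjTranspose_conjTranspose]
  rw [hvm]
  simp only [dotProduct, Matrix.mulVec_diagonal, Pi.star_apply]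
  refine Finset.sum_congr rfl fun i _ => ?_
  rw [Complex.normSq_eq_conj_mul_self]
  rw [show (starRingEnd ℂ) ((star U *ᵥ φ) i) = star ((star U *ᵥ φ) i) from rfl]
  ring

/-- The workhorse: `trR` of `|φ⟩⟨φ| * matFun N g` as a weighted sum over eigenvalues. -/
lemma trR_vecMulVec_matFun (φ : n → ℂ) {N : Matrix n n ℂ} (hN : N.IsHermitian) (g : ℝ → ℝ) :
    trR (vecMulVec φ (star φ) * matFun N g) =
      ∑ i, g (hN.eigenvalues i) *
        Complex.normSq ((star (hN.eigenvectorUnitary : Matrix n n ℂ) *ᵥ φ) i) := by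
  rw [trR, matFun, dif_pos hN, trace_vecMulVec_conj]
  rw [show (∑ i, ((g (hN.eigenvalues i) : ℝ) : ℂ) *
      (Complex.normSq ((star (hN.eigenvectorUnitary : Matrix n n ℂ) *ᵥ φ) i) : ℂ))
      = ((∑ i, g (hN.eigenvalues i) *
      Complex.normSq ((star (hN.eigenvectorUnitary : Matrix n n ℂ) *ᵥ φ) i) : ℝ) : ℂ) by
    push_cast; rfl]
  exact Complex.ofReal_re _

lemma matFun_proj {M : Matrix n n ℂ} (hM : M.IsHermitian) (hP : M * M = M)
    {f : ℝ → ℝ} (hf0 : f 0 = 0) (hf1 : f 1 = 1) : matFun M f = M := by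
  have hD : star (hM.eigenvectorUnitary : Matrix n n ℂ) * M * (hM.eigenvectorUnitary : Matrix n n ℂ)
      = Matrix.diagonal (RCLike.ofReal ∘ hM.eigenvalues) := by
    rw [← Unitary.conjStarAlgAut_star_apply (S := ℂ)]; exact hM.conjStarAlgAut_star_eigenvectorUnitary
  have hsq : ∀ i, hM.eigenvalues i = 0 ∨ hM.eigenvalues i = 1 := by
    intro i
    have hDD : (Matrix.diagonal (RCLike.ofReal ∘ hM.eigenvalues) : Matrix n n ℂ) *
        Matrix.diagonal (RCLike.ofReal ∘ hM.eigenvalues) =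
        Matrix.diagonal (RCLike.ofReal ∘ hM.eigenvalues) := by
      rw [← hD]
      calc (star (hM.eigenvectorUnitary : Matrix n n ℂ) * M * (hM.eigenvectorUnitary : Matrix n n ℂ))
            * (star (hM.eigenvectorUnitary : Matrix n n ℂ) * M * (hM.eigenvectorUnitary : Matrix n n ℂ))
          = star (hM.eigenvectorUnitary : Matrix n n ℂ) * (M *
            (((hM.eigenvectorUnitary : Matrix n n ℂ) * star (hM.eigenvectorUnitary : Matrix n n ℂ)) *
              (M * (hM.eigenvectorUnitary : Matrix n n ℂ)))) := by
            simp only [Matrix.mul_assoc]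
        _ = star (hM.eigenvectorUnitary : Matrix n n ℂ) * M * (hM.eigenvectorUnitary : Matrix n n ℂ) := by
            rw [eigU_mul_star hM, Matrix.one_mul, ← Matrix.mul_assoc M M, hP,
              Matrix.mul_assoc]
    rw [Matrix.diagonal_mul_diagonal] at hDD
    have := congrFun (congrFun hDD i) i
    simp only [Matrix.diagonal_apply_eq, Function.comp_apply, Pi.mul_apply] at this
    have h2 : (hM.eigenvalues i) * (hM.eigenvalues i) = hM.eigenvalues i := by
      exact_mod_cast this
    rcases mul_eq_zero.mp (by rw [mul_sub, mul_one, h2, sub_self] :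
        hM.eigenvalues i * (hM.eigenvalues i - 1) = 0) with h | h
    · exact Or.inl h
    · exact Or.inr (by linarith [sub_eq_zero.mp h])
  have hfe : (fun i => ((f (hM.eigenvalues i) : ℝ) : ℂ)) = RCLike.ofReal ∘ hM.eigenvalues := by
    funext i
    rcases hsq i with h | h <;> simp [h, hf0, hf1]
  rw [matFun, dif_pos hM, hfe]
  exact hM.spectral_theorem.symm

lemma matFun_smul_one (c : ℝ) (f : ℝ → ℝ) :
    matFun (((c : ℝ) : ℂ) • (1 : Matrix n n ℂ)) f = ((f c : ℝ) : ℂ) • 1 := by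
  have hM : (((c : ℝ) : ℂ) • (1 : Matrix n n ℂ)).IsHermitian := by
    unfold Matrix.IsHermitian
    rw [Matrix.conjTranspose_smul, Matrix.conjTranspose_one]
    simp [Complex.star_def, Complex.conj_ofReal]
  have he : ∀ i, hM.eigenvalues i = c := by
    intro i
    have hD : star (hM.eigenvectorUnitary : Matrix n n ℂ) * (((c : ℝ) : ℂ) • (1 : Matrix n n ℂ)) * (hM.eigenvectorUnitary : Matrix n n ℂ)
        = Matrix.diagonal (RCLike.ofReal ∘ hM.eigenvalues) := by
      rw [← Unitary.conjStarAlgAut_star_apply (S := ℂ)]; exact hM.conjStarAlgAut_star_eigenvectorUnitary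
    rw [Matrix.mul_smul, Matrix.smul_mul, Matrix.mul_one, star_mul_eigU hM] at hD
    have := congrFun (congrFun hD i) i
    simp only [Matrix.smul_apply, Matrix.one_apply_eq, Matrix.diagonal_apply_eq,
      Function.comp_apply, smul_eq_mul, mul_one] at this
    have h2 := congrArg Complex.re this
    simpa using h2.symm
  rw [matFun, dif_pos hM]
  have hdg : (fun i => ((f (hM.eigenvalues i) : ℝ) : ℂ)) = fun _ => ((f c : ℝ) : ℂ) := by
    funext i; rw [he i]
  rw [hdg]
  rw [← Matrix.smul_one_eq_diagonal, Matrix.mul_smul, Matrix.smul_mul, Matrix.mul_one,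
    eigU_mul_star hM]

lemma one_kron_isHermitian {A B : Type*} [Fintype A] [Fintype B] [DecidableEq A]
    {σ : Matrix B B ℂ} (hσ : σ.IsHermitian) : ((1 : Matrix A A ℂ) ⊗ₖ σ).IsHermitian := by
  unfold Matrix.IsHermitian
  ext ⟨a, b⟩ ⟨a', b'⟩
  simp only [Matrix.conjTranspose_apply, Matrix.kroneckerMap_apply, star_mul']
  rw [show star ((1 : Matrix A A ℂ) a' a) = (1 : Matrix A A ℂ) a a' by
    simp [Matrix.one_apply, eq_comm, apply_ite star]]
  rw [hσ.apply]

lemma posDef_one_kron {A B : Type*} [Fintype A] [Fintype B] [DecidableEq A] [DecidableEq B]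
    [Nonempty A] {σ : Matrix B B ℂ} (hσ : σ.PosDef) : ((1 : Matrix A A ℂ) ⊗ₖ σ).PosDef := by
  refine Matrix.PosDef.of_dotProduct_mulVec_pos (one_kron_isHermitian hσ.1) fun x hx => ?_
  have key : dotProduct (star x) (((1 : Matrix A A ℂ) ⊗ₖ σ) *ᵥ x)
      = ∑ a : A, dotProduct (star fun b => x (a, b)) (σ *ᵥ fun b => x (a, b)) := by
    simp only [dotProduct, Matrix.mulVec, Fintype.sum_prod_type,
      Matrix.kroneckerMap_apply, Matrix.one_apply, Pi.star_apply, ite_mul, one_mul, zero_mul]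
    refine Finset.sum_congr rfl fun a _ => Finset.sum_congr rfl fun b _ => ?_
    rw [Finset.sum_comm]
    simp [Finset.sum_ite_eq', Finset.mul_sum]
  rw [key]
  obtain ⟨⟨a₀, b₀⟩, hx0⟩ : ∃ p, x p ≠ 0 := by
    by_contra h; push_neg at h; exact hx (funext h)
  refine Finset.sum_pos' (fun a _ => hσ.posSemidef.dotProduct_mulVec_nonneg _) ⟨a₀, Finset.mem_univ _, hσ.dotProduct_mulVec_pos ?_⟩
  exact fun h => hx0 (congrFun h b₀)

lemma jensen_rpow {ι : Type*} [Fintype ι] (w ν : ι → ℝ) (hw : ∀ i, 0 ≤ w i)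
    (hν : ∀ i, 0 < ν i) {lam : ℝ} (hlam : 1 < lam) {m : ℝ} (hm : 0 < m)
    (hw1 : ∑ i, w i = 1) (hsum : ∑ i, w i * ν i = m) :
    m ^ (1 - lam) ≤ ∑ i, w i * ν i ^ (1 - lam) := by
  have h0 : ∀ i ∈ Finset.univ, 0 ≤ w i * ν i / m := fun i _ =>
    div_nonneg (mul_nonneg (hw i) (hν i).le) hm.le
  have h1 : ∑ i, w i * ν i / m = 1 := by
    rw [← Finset.sum_div, hsum, div_self hm.ne']
  have hmem : ∀ i ∈ Finset.univ, m / ν i ∈ Set.Ici (0:ℝ) := fun i _ =>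
    Set.mem_Ici.mpr (div_nonneg hm.le (hν i).le)
  have hkey := (convexOn_rpow hlam.le).map_sum_le h0 h1 hmem
  have hz1 : ∑ i, (w i * ν i / m) • (m / ν i) = 1 := by
    rw [← hw1]
    refine Finset.sum_congr rfl fun i _ => ?_
    rw [smul_eq_mul]
    field_simp
    rw [mul_div_assoc, div_self (hν i).ne', mul_one]
  rw [hz1, Real.one_rpow] at hkey
  have hexp : ∀ i ∈ Finset.univ, (w i * ν i / m) • ((m / ν i) ^ lam)
      = m ^ (lam - 1) * (w i * ν i ^ (1 - lam)) := by
    intro i _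
    have h1' : ν i ^ (1 - lam) = ν i / ν i ^ lam := by
      rw [Real.rpow_sub (hν i), Real.rpow_one]
    have h2' : m ^ (lam - 1) = m ^ lam / m := by
      rw [Real.rpow_sub hm, Real.rpow_one]
    rw [smul_eq_mul, Real.div_rpow hm.le (hν i).le, h1', h2']
    have hν2 : (0:ℝ) < ν i ^ lam := Real.rpow_pos_of_pos (hν i) _
    field_simp
  rw [Finset.sum_congr rfl hexp, ← Finset.mul_sum] at hkey
  have hk : (0:ℝ) < m ^ (lam - 1) := Real.rpow_pos_of_pos hm _
  have hinv : m ^ (1 - lam) = 1 / m ^ (lam - 1) := by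
    rw [show (1 - lam) = -(lam - 1) by ring, Real.rpow_neg hm.le, one_div]
  rw [hinv, div_le_iff₀ hk]
  linarith [mul_comm (m ^ (lam - 1)) (∑ i, w i * ν i ^ (1 - lam))]


/-- Lower bound via Jensen: for a positive definite `N` and unit vector `φ`,
`trR(|φ⟩⟨φ| N^{1-lam}) ≥ m^{1-lam}` where `m = trR(|φ⟩⟨φ| N)`. -/
lemma key_lower {n : Type*} [Fintype n] [DecidableEq n] (φ : n → ℂ) {N : Matrix n n ℂ}
    (hNpd : N.PosDef) {lam : ℝ} (hlam : 1 < lam) {m : ℝ} (hm : 0 < m)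
    (htr1 : trR (vecMulVec φ (star φ)) = 1)
    (htrN : trR (vecMulVec φ (star φ) * N) = m) :
    m ^ (1 - lam) ≤ trR (vecMulVec φ (star φ) * mpow N (1 - lam)) := by
  classical
  have hNh : N.IsHermitian := hNpd.1
  have hν : ∀ i, 0 < hNh.eigenvalues i := fun i => hNpd.eigenvalues_pos i
  have hone : matFun N (fun _ => (1:ℝ)) = 1 := by
    rw [matFun, dif_pos hNh]
    rw [show (fun i => (((1:ℝ)) : ℂ)) = (fun _ : n => (1 : ℂ)) by norm_num]
    rw [Matrix.diagonal_one, Matrix.mul_one, eigU_mul_star hNh]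
  have hid : matFun N (fun x => x) = N := by
    rw [matFun, dif_pos hNh]
    exact hNh.spectral_theorem.symm
  have h1 := trR_vecMulVec_matFun φ hNh (fun _ => (1:ℝ))
  rw [hone, Matrix.mul_one, htr1] at h1
  have h2 := trR_vecMulVec_matFun φ hNh (fun x => x)
  rw [hid, htrN] at h2
  have h3 := trR_vecMulVec_matFun φ hNh (fun x => if x = 0 then 0 else x ^ (1 - lam))
  have hw1 : ∑ i, Complex.normSq ((star (hNh.eigenvectorUnitary : Matrix n n ℂ) *ᵥ φ) i) = 1 := by
    calc ∑ i, Complex.normSq ((star (hNh.eigenvectorUnitary : Matrix n n ℂ) *ᵥ φ) i)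
        = ∑ i, (fun _ : ℝ => (1:ℝ)) (hNh.eigenvalues i) *
            Complex.normSq ((star (hNh.eigenvectorUnitary : Matrix n n ℂ) *ᵥ φ) i) :=
          Finset.sum_congr rfl fun i _ => (one_mul _).symm
      _ = 1 := h1.symm
  have hwm : ∑ i, Complex.normSq ((star (hNh.eigenvectorUnitary : Matrix n n ℂ) *ᵥ φ) i) *
      hNh.eigenvalues i = m := by
    calc ∑ i, Complex.normSq ((star (hNh.eigenvectorUnitary : Matrix n n ℂ) *ᵥ φ) i) *
          hNh.eigenvalues i
        = ∑ i, (fun x : ℝ => x) (hNh.eigenvalues i) *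
            Complex.normSq ((star (hNh.eigenvectorUnitary : Matrix n n ℂ) *ᵥ φ) i) :=
          Finset.sum_congr rfl fun i _ => mul_comm _ _
      _ = m := h2.symm
  have hjen := jensen_rpow
    (fun i => Complex.normSq ((star (hNh.eigenvectorUnitary : Matrix n n ℂ) *ᵥ φ) i))
    (fun i => hNh.eigenvalues i) (fun i => Complex.normSq_nonneg _) hν hlam hm hw1 hwm
  calc m ^ (1 - lam)
      ≤ ∑ i, Complex.normSq ((star (hNh.eigenvectorUnitary : Matrix n n ℂ) *ᵥ φ) i) *
          hNh.eigenvalues i ^ (1 - lam) := hjen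
    _ = trR (vecMulVec φ (star φ) * mpow N (1 - lam)) := by
        rw [show mpow N (1 - lam)
            = matFun N (fun x => if x = 0 then 0 else x ^ (1 - lam)) from rfl, h3]
        exact Finset.sum_congr rfl fun i _ => by simp [(hν i).ne', mul_comm]

end AuxLemmas

set_option maxHeartbeats 1600000 in
/-- For the maximally entangled state of Schmidt rank `d`,
`K_λ(A⟩B) = ln d`, and `Tr[(Tr_A(|φ⟩⟨φ|^λ))^{1/λ}] = d^{(λ−1)/λ}`. -/
theorem maximally_entangled_Kinf (d : ℕ) (hd : 1 ≤ d)
    (lam : ℝ) (hlam : 1 < lam)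
    (φ : Fin d × Fin d → ℂ)
    (hφ : φ = fun x : Fin d × Fin d =>
      if x.1 = x.2 then (((Real.sqrt d)⁻¹ : ℝ) : ℂ) else 0) :
    Kinf lam (Matrix.vecMulVec φ (star φ)) = Real.log d ∧
      trR (mpow (ptrA (mpow (Matrix.vecMulVec φ (star φ)) lam)) (1 / lam)) =
        (d : ℝ) ^ ((lam - 1) / lam) := by
  haveI : Nonempty (Fin d) := ⟨⟨0, by omega⟩⟩
  have hd0 : (0:ℝ) < d := by exact_mod_cast Nat.lt_of_lt_of_le Nat.zero_lt_one hd
  have hdC : ((d:ℝ) : ℂ) ≠ 0 := by exact_mod_cast hd0.ne'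
  have hlam0 : lam ≠ 0 := by linarith
  have hlam1 : lam - 1 ≠ 0 := by linarith
  set ρ : Matrix (Fin d × Fin d) (Fin d × Fin d) ℂ := Matrix.vecMulVec φ (star φ) with hρ
  -- basic φ facts
  have hφself : ∀ x : Fin d × Fin d, star (φ x) * φ x
      = if x.1 = x.2 then (((d:ℝ)⁻¹ : ℝ) : ℂ) else 0 := by
    intro x
    rw [hφ]
    by_cases h : x.1 = x.2 <;>
      simp [h, Complex.star_def, Complex.conj_ofReal, ← Complex.ofReal_mul, ← mul_inv,
        Real.mul_self_sqrt hd0.le]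
  have hunit : star φ ⬝ᵥ φ = 1 := by
    rw [dotProduct]
    simp only [Pi.star_apply]
    rw [Finset.sum_congr rfl (fun x _ => hφself x), Fintype.sum_prod_type]
    simp only [Finset.sum_ite_eq, Finset.mem_univ, if_true]
    rw [Finset.sum_const, Finset.card_univ, Fintype.card_fin, nsmul_eq_mul]
    push_cast
    rw [mul_inv_cancel₀ (Nat.cast_ne_zero.mpr (by omega) : (d:ℂ) ≠ 0)]
  have hherm : ρ.IsHermitian := by
    rw [hρ]
    unfold Matrix.IsHermitian
    ext i j
    simp only [Matrix.conjTranspose_apply, Matrix.vecMulVec_apply, Pi.star_apply, star_mul',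
      star_star]
    ring
  have hproj : ρ * ρ = ρ := by
    ext i j
    rw [Matrix.mul_apply]
    calc ∑ k, ρ i k * ρ k j = (star φ ⬝ᵥ φ) * (φ i * star φ j) := by
          rw [dotProduct, Finset.sum_mul]
          exact Finset.sum_congr rfl fun k _ => by
            simp only [hρ, Matrix.vecMulVec_apply, Pi.star_apply]; ring
      _ = ρ i j := by
          rw [hunit, one_mul, hρ]
          simp [Matrix.vecMulVec_apply]
  have htr : ρ.trace = 1 := by
    rw [hρ, Matrix.trace]
    simp only [Matrix.diag_apply, Matrix.vecMulVec_apply]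
    rw [← hunit, dotProduct]
    exact Finset.sum_congr rfl fun x _ => by simp [mul_comm]
  have htrR : trR ρ = 1 := by rw [trR, htr, Complex.one_re]
  have hmpowρ : mpow ρ lam = ρ := by
    rw [mpow]
    exact matFun_proj hherm hproj (by simp) (by simp [Real.one_rpow])
  -- trace of ρ against 1 ⊗ σ
  have hss : ((((Real.sqrt d)⁻¹ : ℝ)) : ℂ) * ((((Real.sqrt d)⁻¹ : ℝ)) : ℂ) = (((d:ℝ)⁻¹ : ℝ) : ℂ) := by
    rw [← Complex.ofReal_mul, ← mul_inv, Real.mul_self_sqrt hd0.le]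
  have htraceρN : ∀ σ : Matrix (Fin d) (Fin d) ℂ,
      (ρ * ((1 : Matrix (Fin d) (Fin d) ℂ) ⊗ₖ σ)).trace = (((d:ℝ)⁻¹ : ℝ) : ℂ) * σ.trace := by
    intro σ
    rw [hρ, trace_vecMulVec_mul]
    have hNv : ∀ p : Fin d × Fin d,
        ((((1 : Matrix (Fin d) (Fin d) ℂ) ⊗ₖ σ)) *ᵥ φ) p
          = σ p.2 p.1 * ((Real.sqrt d)⁻¹ : ℝ) := by
      rintro ⟨a, b⟩
      rw [Matrix.mulVec, dotProduct, Fintype.sum_prod_type, hφ]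
      simp [Matrix.kroneckerMap_apply, Matrix.one_apply, ite_mul, mul_ite, Finset.sum_ite_eq,
        Finset.sum_ite_eq']
    rw [dotProduct]
    rw [Finset.sum_congr rfl (fun p _ => by rw [Pi.star_apply, hNv p])]
    have hterm : ∀ p : Fin d × Fin d,
        star (φ p) * (σ p.2 p.1 * (((Real.sqrt d)⁻¹ : ℝ) : ℂ))
          = if p.1 = p.2 then (((d:ℝ)⁻¹ : ℝ) : ℂ) * σ p.2 p.1 else 0 := by
      intro p
      have hφp : φ p = if p.1 = p.2 then (((Real.sqrt d)⁻¹ : ℝ) : ℂ) else 0 := by rw [hφ]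
      rw [hφp]
      by_cases h : p.1 = p.2
      · rw [if_pos h, if_pos h, show star ((((Real.sqrt d)⁻¹ : ℝ)) : ℂ)
            = ((((Real.sqrt d)⁻¹ : ℝ)) : ℂ) from Complex.conj_ofReal _]
        linear_combination σ p.2 p.1 * hss
      · rw [if_neg h, if_neg h, star_zero, zero_mul]
    rw [Finset.sum_congr rfl fun p _ => hterm p]
    rw [show (∑ p : Fin d × Fin d, if p.1 = p.2 then (((d:ℝ)⁻¹ : ℝ) : ℂ) * σ p.2 p.1 else 0)
        = ∑ a : Fin d, (((d:ℝ)⁻¹ : ℝ) : ℂ) * σ a a from by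
      rw [Fintype.sum_prod_type]
      simp]
    rw [Matrix.trace, Finset.mul_sum]
    rfl
  -- the candidate optimal σ₀
  set c : ℝ := (d : ℝ)⁻¹ with hc
  have hcpos : 0 < c := inv_pos.mpr hd0
  set σ₀ : Matrix (Fin d) (Fin d) ℂ := ((c : ℝ) : ℂ) • 1 with hσ₀
  have hσ₀pd : σ₀.PosDef := by
    rw [hσ₀, Matrix.smul_one_eq_diagonal]
    exact Matrix.PosDef.diagonal fun _ => by
      rw [Complex.zero_lt_real]; exact hcpos
  have hσ₀tr : σ₀.trace = 1 := by
    rw [hσ₀, Matrix.trace_smul, Matrix.trace_one, smul_eq_mul, hc, Fintype.card_fin]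
    push_cast
    rw [inv_mul_cancel₀ (Nat.cast_ne_zero.mpr (by omega) : (d:ℂ) ≠ 0)]
  -- lower bound
  have hlower : ∀ σ : {σ : Matrix (Fin d) (Fin d) ℂ // σ.PosDef ∧ σ.trace = 1},
      Real.log d ≤ renyiD lam ρ ((1 : Matrix (Fin d) (Fin d) ℂ) ⊗ₖ (σ : Matrix (Fin d) (Fin d) ℂ)) := by
    rintro ⟨σ, hσpd, hσtr⟩
    have hNpd : ((1 : Matrix (Fin d) (Fin d) ℂ) ⊗ₖ σ).PosDef := posDef_one_kron hσpd
    have htrN : trR (ρ * ((1 : Matrix (Fin d) (Fin d) ℂ) ⊗ₖ σ)) = (d:ℝ)⁻¹ := by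
      rw [trR, htraceρN σ, hσtr, mul_one, Complex.ofReal_re]
    have hJ : ((d:ℝ)⁻¹) ^ (1 - lam)
        ≤ trR (vecMulVec φ (star φ) * mpow ((1 : Matrix (Fin d) (Fin d) ℂ) ⊗ₖ σ) (1 - lam)) :=
      key_lower φ hNpd hlam (inv_pos.mpr hd0) htrR htrN
    have hmp : (0:ℝ) < ((d:ℝ)⁻¹) ^ (1 - lam) := Real.rpow_pos_of_pos (inv_pos.mpr hd0) _
    rw [renyiD, hmpowρ]
    calc Real.log d = (1 / (lam - 1)) * Real.log (((d:ℝ)⁻¹) ^ (1 - lam)) := by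
          rw [Real.log_rpow (inv_pos.mpr hd0), Real.log_inv]
          field_simp
          ring
      _ ≤ (1 / (lam - 1)) * Real.log
            (trR (ρ * mpow ((1 : Matrix (Fin d) (Fin d) ℂ) ⊗ₖ σ) (1 - lam))) := by
          refine mul_le_mul_of_nonneg_left ?_ (le_of_lt (div_pos one_pos (by linarith)))
          exact Real.log_le_log hmp hJ
  -- value at σ₀
  have hval : renyiD lam ρ ((1 : Matrix (Fin d) (Fin d) ℂ) ⊗ₖ σ₀) = Real.log d := by
    have hkron : (1 : Matrix (Fin d) (Fin d) ℂ) ⊗ₖ σ₀ = ((c : ℝ) : ℂ) • 1 := by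
      rw [hσ₀, Matrix.kronecker_smul, Matrix.one_kronecker_one]
    have hfc : (fun x : ℝ => if x = 0 then (0:ℝ) else x ^ (1 - lam)) c = c ^ (1 - lam) :=
      if_neg hcpos.ne'
    have hmp : mpow (((c : ℝ) : ℂ) • (1 : Matrix (Fin d × Fin d) (Fin d × Fin d) ℂ)) (1 - lam)
        = ((c ^ (1 - lam) : ℝ) : ℂ) • 1 := by
      rw [mpow, matFun_smul_one c, if_neg hcpos.ne']
    rw [renyiD, hmpowρ, hkron, hmp, Matrix.mul_smul, Matrix.mul_one]
    rw [trR, Matrix.trace_smul, htr, smul_eq_mul, mul_one, Complex.ofReal_re]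
    rw [hc, Real.log_rpow hcpos, Real.log_inv]
    field_simp
    ring
  -- conclude part 1
  have hKinf : Kinf lam ρ = Real.log d := by
    haveI : Nonempty {σ : Matrix (Fin d) (Fin d) ℂ // σ.PosDef ∧ σ.trace = 1} :=
      ⟨⟨σ₀, hσ₀pd, hσ₀tr⟩⟩
    rw [Kinf]
    refine le_antisymm ?_ (le_ciInf hlower)
    have h := ciInf_le (f := fun σ : {σ : Matrix (Fin d) (Fin d) ℂ // σ.PosDef ∧ σ.trace = 1} =>
      renyiD lam ρ ((1 : Matrix (Fin d) (Fin d) ℂ) ⊗ₖ (σ : Matrix (Fin d) (Fin d) ℂ)))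
      ⟨Real.log d, by rintro x ⟨σ, rfl⟩; exact hlower σ⟩ ⟨σ₀, hσ₀pd, hσ₀tr⟩
    rw [hval] at h
    exact h
  -- part 2
  have hptr : ptrA ρ = ((c : ℝ) : ℂ) • (1 : Matrix (Fin d) (Fin d) ℂ) := by
    ext b b'
    rw [ptrA]
    simp only [Matrix.of_apply, hρ, Matrix.vecMulVec_apply, Pi.star_apply]
    have hterm : ∀ a : Fin d, φ (a, b) * star (φ (a, b'))
        = if a = b ∧ a = b' then ((c : ℝ) : ℂ) else 0 := by
      intro a
      have e1 : φ (a, b) = if a = b then (((Real.sqrt d)⁻¹ : ℝ) : ℂ) else 0 := by rw [hφ]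
      have e2 : φ (a, b') = if a = b' then (((Real.sqrt d)⁻¹ : ℝ) : ℂ) else 0 := by rw [hφ]
      rw [e1, e2]
      by_cases h1 : a = b <;> by_cases h2 : a = b'
      · rw [if_pos h1, if_pos h2, if_pos ⟨h1, h2⟩,
          show star ((((Real.sqrt d)⁻¹ : ℝ)) : ℂ) = ((((Real.sqrt d)⁻¹ : ℝ)) : ℂ) from
            Complex.conj_ofReal _]
        exact hss
      · rw [if_pos h1, if_neg h2, if_neg (fun hx => h2 hx.2), star_zero, mul_zero]
      · rw [if_neg h1, if_pos h2, if_neg (fun hx => h1 hx.1), zero_mul]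
      · rw [if_neg h1, if_neg h2, if_neg (fun hx => h1 hx.1), zero_mul]
    rw [Finset.sum_congr rfl fun a _ => hterm a]
    by_cases h : b = b'
    · subst h
      simp [Matrix.one_apply_eq, Finset.sum_ite_eq]
    · rw [Finset.sum_eq_zero fun a _ => by
        rw [if_neg]; rintro ⟨rfl, rfl⟩; exact h rfl]
      simp [Matrix.one_apply_ne h]
  have hfc2 : (fun x : ℝ => if x = 0 then (0:ℝ) else x ^ (1 / lam)) c = c ^ (1 / lam) :=
    if_neg hcpos.ne'
  have hpart2 : trR (mpow (ptrA (mpow ρ lam)) (1 / lam)) = (d : ℝ) ^ ((lam - 1) / lam) := by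
    rw [hmpowρ, hptr, mpow, matFun_smul_one c, if_neg hcpos.ne', trR, Matrix.trace_smul,
      Matrix.trace_one, smul_eq_mul, Fintype.card_fin]
    rw [show (((c ^ (1 / lam) : ℝ) : ℂ) * ((d : ℕ) : ℂ)) = (((c ^ (1 / lam) * (d:ℝ)) : ℝ) : ℂ) by
      push_cast; ring]
    rw [Complex.ofReal_re, hc, Real.inv_rpow hd0.le, ← Real.rpow_neg hd0.le]
    calc (d:ℝ) ^ (-(1 / lam)) * (d:ℝ) = (d:ℝ) ^ (-(1 / lam)) * (d:ℝ) ^ (1:ℝ) := by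
          rw [Real.rpow_one]
      _ = (d:ℝ) ^ (-(1 / lam) + 1) := (Real.rpow_add hd0 _ _).symm
      _ = (d:ℝ) ^ ((lam - 1) / lam) := by
          rw [show -(1 / lam) + 1 = (lam - 1) / lam by field_simp; ring]
  exact ⟨hKinf, hpart2⟩
end

section
/- (Analytic content of the strong converse for the quantum erasure channel.) Let d ≥ 2 be a natural number, p ∈ [0,1] real, and R a real number with R > 0 and R > (1−2p)·ln d. Then there exists s ∈ [−1/2, 0) such that s·R + ln( (1−p)·d^{−s} + p·d^{s} ) < 0; equivalently, s·R − E₀(s) < 0 where E₀(s) := −ln( (1−p)·d^{−s} + p·d^{s} ). -/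
/-- Analytic content of the strong converse for the quantum erasure channel:
for rates above `(1−2p)·ln d` there is `s ∈ [−1/2, 0)` making the Gallager
exponent bound exponentially decaying, i.e. `s·R − E₀(s) < 0`. -/
theorem erasure_strong_converse_exponent (d : ℕ) (hd : 2 ≤ d) (p R : ℝ)
    (hp₀ : 0 ≤ p) (hp₁ : p ≤ 1) (hR₀ : 0 < R)
    (hR : (1 - 2 * p) * Real.log d < R) :
    ∃ s : ℝ, -(1/2) ≤ s ∧ s < 0 ∧
      s * R + Real.log ((1 - p) * (d : ℝ) ^ (-s) + p * (d : ℝ) ^ s) < 0 := by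
  have hd0 : (0:ℝ) < d := by exact_mod_cast Nat.lt_of_lt_of_le (by norm_num) hd
  set D := Real.log d with hD
  set f : ℝ → ℝ := fun s =>
    s * R + Real.log ((1 - p) * Real.exp (D * (-s)) + p * Real.exp (D * s)) with hf
  have hfg : ∀ s : ℝ, s * R + Real.log ((1 - p) * (d : ℝ) ^ (-s) + p * (d : ℝ) ^ s) = f s := by
    intro s
    simp [hf, Real.rpow_def_of_pos hd0, hD]
  have hf0 : f 0 = 0 := by simp [hf]
  -- derivative of inner function at 0
  have h1 : HasDerivAt (fun s : ℝ => (1 - p) * Real.exp (D * (-s)) + p * Real.exp (D * s))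
      ((1 - p) * (-D) + p * D) 0 := by
    have ha : HasDerivAt (fun s : ℝ => Real.exp (D * (-s))) (-D) 0 := by
      have := (((hasDerivAt_id (0:ℝ)).neg).const_mul D).exp
      simpa using this
    have hb : HasDerivAt (fun s : ℝ => Real.exp (D * s)) D 0 := by
      have := (((hasDerivAt_id (0:ℝ))).const_mul D).exp
      simpa using this
    exact (ha.const_mul (1 - p)).add (hb.const_mul p)
  have hne : (1 - p) * Real.exp (D * (-(0:ℝ))) + p * Real.exp (D * 0) ≠ 0 := by
    simp
  have h2 : HasDerivAt f (R + ((1 - p) * (-D) + p * D)) 0 := by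
    have hlog := h1.log hne
    have hline : HasDerivAt (fun s : ℝ => s * R) R 0 := by
      simpa using (hasDerivAt_id (0:ℝ)).mul_const R
    have := hline.add hlog
    simpa [hf, Pi.add_def] using this
  have hderivpos : 0 < R + ((1 - p) * (-D) + p * D) := by nlinarith [hR]
  have hslope := hasDerivAt_iff_tendsto_slope.mp h2
  have hev : ∀ᶠ s in nhdsWithin (0:ℝ) {(0:ℝ)}ᶜ, 0 < slope f 0 s :=
    hslope.eventually (eventually_gt_nhds hderivpos)
  have hmono : nhdsWithin (0:ℝ) (Set.Iio 0) ≤ nhdsWithin (0:ℝ) {(0:ℝ)}ᶜ :=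
    nhdsWithin_mono _ (fun x hx => ne_of_lt hx)
  have hev2 : ∀ᶠ s in nhdsWithin (0:ℝ) (Set.Iio 0), 0 < slope f 0 s := hev.filter_mono hmono
  have hmem : Set.Ioo (-(1/2) : ℝ) 0 ∈ nhdsWithin (0:ℝ) (Set.Iio 0) :=
    Ioo_mem_nhdsLT_of_mem (by norm_num : (0:ℝ) ∈ Set.Ioc (-(1/2)) 0)
  obtain ⟨s, hs1, hs2⟩ := (hev2.and (Filter.eventually_of_mem hmem (fun x hx => hx))).exists
  refine ⟨s, le_of_lt hs2.1, hs2.2, ?_⟩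
  rw [hfg]
  have hslopeval : slope f 0 s = f s / s := by
    simp [slope, hf0, div_eq_inv_mul]
  rw [hslopeval] at hs1
  rcases div_pos_iff.mp hs1 with ⟨h, h'⟩ | ⟨h, h'⟩
  · exact absurd hs2.2 (not_lt.mpr (le_of_lt h'))
  · exact h
end

section
/- Let d ≥ 2 be a natural number and p ∈ [0,1] real, and define E₀(s) := −ln( (1−p)·d^{−s} + p·d^{s} ) for real s. Then E₀(s)/s tends to (1−2p)·ln d as s tends to 0 from the left: the function s ↦ E₀(s)/s converges to (1−2p)·ln d along the filter nhdsWithin 0 (Iio 0). (For p ∈ [0,1/2] this limit equals the quantum capacity (1−2p)·ln d of the erasure channel.) -/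
/-- `E₀(s)/s → (1−2p)·ln d` as `s → 0⁻`, where
`E₀(s) = −ln((1−p)·d^{−s} + p·d^{s})` is the Gallager exponent of the
quantum erasure channel. -/
theorem erasure_E0_div_s_tendsto (d : ℕ) (hd : 2 ≤ d) (p : ℝ)
    (hp₀ : 0 ≤ p) (hp₁ : p ≤ 1) :
    Filter.Tendsto
      (fun s : ℝ =>
        (-Real.log ((1 - p) * (d : ℝ) ^ (-s) + p * (d : ℝ) ^ s)) / s)
      (nhdsWithin 0 (Set.Iio 0))
      (nhds ((1 - 2 * p) * Real.log d)) := by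
  have hd0 : (0:ℝ) < d := by positivity
  set f : ℝ → ℝ := fun s => (1 - p) * (d : ℝ) ^ (-s) + p * (d : ℝ) ^ s with hf
  have hfpos : ∀ s : ℝ, 0 < f s := by
    intro s
    have h1 : (0:ℝ) < (d:ℝ) ^ (-s) := Real.rpow_pos_of_pos hd0 _
    have h2 : (0:ℝ) < (d:ℝ) ^ s := Real.rpow_pos_of_pos hd0 _
    rcases lt_or_eq_of_le hp₁ with h | h
    · exact add_pos_of_pos_of_nonneg (mul_pos (by linarith) h1) (mul_nonneg hp₀ h2.le)
    · show (0:ℝ) < (1 - p) * (d : ℝ) ^ (-s) + p * (d : ℝ) ^ s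
      rw [h]; simpa using h2
  -- derivative of f at 0
  have hds : HasDerivAt (fun s : ℝ => (d:ℝ) ^ s) ((d:ℝ) ^ (0:ℝ) * Real.log d) 0 :=
    (Real.hasStrictDerivAt_const_rpow hd0 0).hasDerivAt
  have hdns : HasDerivAt (fun s : ℝ => (d:ℝ) ^ (-s))
      (-((d:ℝ) ^ (-(0:ℝ)) * Real.log d)) 0 := by
    have := ((Real.hasStrictDerivAt_const_rpow hd0 (-(0:ℝ))).hasDerivAt).comp 0 (hasDerivAt_neg (0:ℝ))
    simpa [mul_comm, Function.comp_def] using this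
  have hf' : HasDerivAt f ((2 * p - 1) * Real.log d) 0 := by
    have h := ((hdns.const_mul (1 - p)).add (hds.const_mul p))
    have : (1 - p) * -((d:ℝ) ^ (-(0:ℝ)) * Real.log d) + p * ((d:ℝ) ^ (0:ℝ) * Real.log d)
        = (2 * p - 1) * Real.log d := by
      simp [Real.rpow_zero]; ring
    rw [this] at h
    exact h
  have hg : HasDerivAt (fun s => -Real.log (f s)) ((1 - 2 * p) * Real.log d) 0 := by
    have := (hf'.log (hfpos 0).ne').neg
    have hf0 : f 0 = 1 := by simp [hf]
    rw [hf0] at this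
    exact this.congr_deriv (by ring)
  have hslope := hasDerivAt_iff_tendsto_slope.mp hg
  have hg0 : -Real.log (f 0) = 0 := by simp [hf]
  have : Filter.Tendsto (fun s : ℝ => (-Real.log (f s)) / s)
      (nhdsWithin 0 {(0:ℝ)}ᶜ) (nhds ((1 - 2 * p) * Real.log d)) := by
    refine hslope.congr' ?_
    filter_upwards [self_mem_nhdsWithin] with s hs
    simp [slope, hg0, vsub_eq_sub, div_eq_inv_mul]
  exact this.mono_left (nhdsWithin_mono _ (fun x hx => ne_of_lt hx))
end

section
/- (Monotonicity of the hockey-stick divergence.) Let n, m be nonempty finite types and let Φ be a ℂ-linear map from matrices indexed by n to matrices indexed by m that is positive (it maps positive semidefinite matrices to positive semidefinite matrices) and trace-preserving (Tr Φ(X) = Tr X for all X). Then for all positive semidefinite matrices ρ, σ indexed by n and every real γ > 0, Tr( (ρ − γσ)⁺ ) ≥ Tr( (Φ(ρ) − γΦ(σ))⁺ ), where for a Hermitian matrix X, Tr(X⁺) denotes the sum of max(μ, 0) over the eigenvalues μ of X (the trace of the positive part of X in the Jordan decomposition). -/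
open scoped Kronecker
open Matrix
open scoped ComplexOrder

section hsAux

variable {k : Type*} [Fintype k] [DecidableEq k]

lemma trace_re_nonneg {M : Matrix k k ℂ} (hM : M.PosSemidef) : 0 ≤ M.trace.re := by
  have h : ∀ i, 0 ≤ M i i := fun i => by
    exact hM.diag_nonneg
  have h2 : (0 : ℂ) ≤ M.trace := Finset.sum_nonneg fun i _ => h i
  exact (Complex.le_def.mp h2).1

lemma trace_mul_re_nonneg {Q B : Matrix k k ℂ} (hQ : Q.PosSemidef) (hB : B.PosSemidef) :
    0 ≤ (Q * B).trace.re := by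
  open scoped MatrixOrder in obtain ⟨C, rfl⟩ := CStarAlgebra.nonneg_iff_eq_star_mul_self.mp hQ.nonneg
  rw [mul_assoc, Matrix.trace_mul_comm]
  exact trace_re_nonneg (hB.mul_mul_conjTranspose_same C)

lemma conj_mul_conj (U : Matrix.unitaryGroup k ℂ) (f g : k → ℂ) :
    ((U : Matrix k k ℂ) * diagonal f * star (U : Matrix k k ℂ)) *
      ((U : Matrix k k ℂ) * diagonal g * star (U : Matrix k k ℂ)) =
    (U : Matrix k k ℂ) * diagonal (f * g) * star (U : Matrix k k ℂ) := by
  have h1 : star (U : Matrix k k ℂ) * (U : Matrix k k ℂ) = 1 := Unitary.coe_star_mul_self U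
  calc ((U : Matrix k k ℂ) * diagonal f * star (U : Matrix k k ℂ)) *
      ((U : Matrix k k ℂ) * diagonal g * star (U : Matrix k k ℂ))
      = (U : Matrix k k ℂ) * diagonal f * (star (U : Matrix k k ℂ) * (U : Matrix k k ℂ)) *
        diagonal g * star (U : Matrix k k ℂ) := by noncomm_ring
    _ = (U : Matrix k k ℂ) * (diagonal f * diagonal g) * star (U : Matrix k k ℂ) := by
        rw [h1]; noncomm_ring
    _ = _ := by rw [diagonal_mul_diagonal]; rfl

lemma conj_trace (U : Matrix.unitaryGroup k ℂ) (f : k → ℂ) :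
    ((U : Matrix k k ℂ) * diagonal f * star (U : Matrix k k ℂ)).trace = ∑ i, f i := by
  rw [Matrix.trace_mul_cycle, Unitary.coe_star_mul_self U, one_mul, Matrix.trace_diagonal]

lemma conj_posSemidef_s13 (U : Matrix.unitaryGroup k ℂ) {f : k → ℂ} (hf : ∀ i, 0 ≤ f i) :
    ((U : Matrix k k ℂ) * diagonal f * star (U : Matrix k k ℂ)).PosSemidef := by
  exact (Matrix.posSemidef_diagonal_iff.mpr hf).mul_mul_conjTranspose_same _


variable {k : Type*} [Fintype k] [DecidableEq k]

lemma jordan {X : Matrix k k ℂ} (hX : X.IsHermitian) :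
    ∃ P N : Matrix k k ℂ, P.PosSemidef ∧ N.PosSemidef ∧ X = P - N ∧
      P.trace.re = trPos X := by
  set U := hX.eigenvectorUnitary
  set ev := hX.eigenvalues
  refine ⟨(U : Matrix k k ℂ) * diagonal (fun i => ((max (ev i) 0 : ℝ) : ℂ)) * star (U : Matrix k k ℂ),
    (U : Matrix k k ℂ) * diagonal (fun i => ((max (-ev i) 0 : ℝ) : ℂ)) * star (U : Matrix k k ℂ),
    conj_posSemidef_s13 U (fun i => Complex.zero_le_real.2 (le_max_right _ _)),
    conj_posSemidef_s13 U (fun i => Complex.zero_le_real.2 (le_max_right _ _)), ?_, ?_⟩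
  · conv_lhs => rw [hX.spectral_theorem]
    rw [← sub_mul, ← mul_sub, diagonal_sub]
    have hfun : (RCLike.ofReal ∘ hX.eigenvalues : k → ℂ) =
        fun i => ((max (ev i) 0 : ℝ) : ℂ) - ((max (-ev i) 0 : ℝ) : ℂ) := by
      funext i
      show ((ev i : ℝ) : ℂ) = _
      rw [← Complex.ofReal_sub, Complex.ofReal_inj]
      rcases le_total (ev i) 0 with h | h
      · rw [max_eq_right h, max_eq_left (by linarith)]; ring
      · rw [max_eq_left h, max_eq_right (by linarith)]; ring
    rw [hfun]
    rfl
  · rw [conj_trace, Complex.re_sum, trPos, dif_pos hX]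
    exact Finset.sum_congr rfl fun i _ => by simp; rfl

lemma trPos_sub_le {A B : Matrix k k ℂ} (hA : A.PosSemidef) (hB : B.PosSemidef) :
    trPos (A - B) ≤ A.trace.re := by
  have hY : (A - B).IsHermitian := hA.1.sub hB.1
  set U := hY.eigenvectorUnitary
  set ev := hY.eigenvalues
  set ind : k → ℂ := fun i => if 0 ≤ ev i then 1 else 0 with hind
  set Q : Matrix k k ℂ := (U : Matrix k k ℂ) * diagonal ind * star (U : Matrix k k ℂ) with hQdef
  have hQ : Q.PosSemidef := conj_posSemidef_s13 U fun i => by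
    by_cases h : 0 ≤ ev i <;> simp [hind, h]
  have h1Q : (1 - Q).PosSemidef := by
    have hone : (1 : Matrix k k ℂ) =
        (U : Matrix k k ℂ) * diagonal (fun _ => (1:ℂ)) * star (U : Matrix k k ℂ) := by
      rw [diagonal_one, mul_one, (Matrix.mem_unitaryGroup_iff).mp U.2]
    rw [hone, hQdef, ← sub_mul, ← mul_sub, diagonal_sub]
    refine conj_posSemidef_s13 U fun i => ?_
    by_cases h : 0 ≤ ev i <;> simp [hind, h]
  have key : trPos (A - B) = (Q * (A - B)).trace.re := by
    have : Q * (A - B) = (U : Matrix k k ℂ) *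
        diagonal (ind * fun i => (ev i : ℂ)) * star (U : Matrix k k ℂ) := by
      conv_lhs => rw [hY.spectral_theorem]
      exact conj_mul_conj U _ _
    rw [this, conj_trace, Complex.re_sum, trPos, dif_pos hY]
    refine Finset.sum_congr rfl fun i _ => ?_
    by_cases h : 0 ≤ ev i
    · simp [hind, h, max_eq_left h]; exact max_eq_left h
    · simp [hind, h, max_eq_right (le_of_not_ge h)]; exact le_of_not_ge h
  have h2 : (Q * (A - B)).trace.re ≤ (Q * A).trace.re := by
    rw [mul_sub, trace_sub, Complex.sub_re]
    linarith [trace_mul_re_nonneg hQ hB]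
  have h3 : (Q * A).trace.re ≤ A.trace.re := by
    have := trace_mul_re_nonneg h1Q hA
    rw [sub_mul, one_mul, trace_sub, Complex.sub_re] at this
    linarith
  rw [key]; linarith
end hsAux


/-- Monotonicity of the hockey-stick divergence under positive
trace-preserving linear maps:
`Tr((ρ − γσ)⁺) ≥ Tr((Φρ − γΦσ)⁺)`. -/
theorem hockey_stick_monotone
    {n m : Type*} [Fintype n] [Fintype m] [DecidableEq n] [DecidableEq m]
    [Nonempty n] [Nonempty m]
    (Φ : Matrix n n ℂ →ₗ[ℂ] Matrix m m ℂ)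
    (hpos : ∀ X : Matrix n n ℂ, X.PosSemidef → (Φ X).PosSemidef)
    (htr : ∀ X : Matrix n n ℂ, (Φ X).trace = X.trace)
    (ρ σ : Matrix n n ℂ) (hρ : ρ.PosSemidef) (hσ : σ.PosSemidef)
    (γ : ℝ) (hγ : 0 < γ) :
    trPos (Φ ρ - (γ : ℂ) • Φ σ) ≤ trPos (ρ - (γ : ℂ) • σ) := by
  have hγσ : ((γ : ℂ) • σ).PosSemidef := by
    constructor
    · show ((γ : ℂ) • σ)ᴴ = _
      rw [conjTranspose_smul, hσ.1.eq]
      congr 1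
      simp [Complex.star_def, Complex.conj_ofReal]
    · intro x
      exact (hσ.smul (a := (γ : ℂ)) (Complex.zero_le_real.2 hγ.le)).2 x
  have hX : (ρ - (γ : ℂ) • σ).IsHermitian := hρ.1.sub hγσ.1
  obtain ⟨P, N, hP, hN, hXeq, htrP⟩ := jordan hX
  have hmap : Φ ρ - (γ : ℂ) • Φ σ = Φ P - Φ N := by
    rw [← _root_.map_smul, ← map_sub, hXeq, map_sub]
  rw [hmap, ← htrP, ← htr P]
  exact trPos_sub_le (hpos P hP) (hpos N hN)
end

section
/- (Orthogonal additivity of the Sibson functional.) Let A, B be nonempty finite types, λ > 1 real, I a finite index type, (c_i)_{i∈I} nonnegative reals, (ρ_i)_{i∈I} density matrices indexed by A×B, and (P_i)_{i∈I} Hermitian projection matrices indexed by B that are pairwise orthogonal (P_i·P_j = 0 for i ≠ j) and satisfy (1_A⊗P_i)·ρ_i·(1_A⊗P_i) = ρ_i for every i. Then Tr[ ( Tr_A( (∑_{i∈I} c_i·ρ_i)^{λ} ) )^{1/λ} ] = ∑_{i∈I} c_i · Tr[ ( Tr_A( ρ_i^{λ} ) )^{1/λ} ]. -/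
open scoped Kronecker
open Matrix
open scoped ComplexOrder

section Aux

open Polynomial

variable {n : Type*} [Fintype n] [DecidableEq n]


lemma diagonal_congr {f g : n → ℂ} (h : ∀ i, f i = g i) :
    Matrix.diagonal f = Matrix.diagonal g :=
  congrArg Matrix.diagonal (funext h)

/-- Polynomial functional calculus through a unitary diagonalization. -/
lemma aeval_unitary_conj_s14 (U : Matrix n n ℂ) (hU : U ∈ Matrix.unitaryGroup n ℂ)
    (d : n → ℂ) (q : ℂ[X]) :
    Polynomial.aeval (U * Matrix.diagonal d * star U) q =
      U * Matrix.diagonal (fun i => q.eval (d i)) * star U := by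
  have hUs : U * star U = 1 := Matrix.mem_unitaryGroup_iff.mp hU
  have hsU : star U * U = 1 := Matrix.mem_unitaryGroup_iff'.mp hU
  have hpow : ∀ m : ℕ, (U * Matrix.diagonal d * star U) ^ m
      = U * Matrix.diagonal (fun i => d i ^ m) * star U := by
    intro m
    induction m with
    | zero =>
      simp only [pow_zero]
      have : (Matrix.diagonal fun i => (1 : ℂ)) = (1 : Matrix n n ℂ) := Matrix.diagonal_one
      rw [this, Matrix.mul_one, hUs]
    | succ m ih =>
      rw [pow_succ, ih]
      simp only [Matrix.mul_assoc]
      rw [← Matrix.mul_assoc (star U) U, hsU, Matrix.one_mul,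
        ← Matrix.mul_assoc (Matrix.diagonal fun i => d i ^ m), Matrix.diagonal_mul_diagonal]
      simp [pow_succ]
  induction q using Polynomial.induction_on' with
  | add p q hp hq =>
    have hD : (Matrix.diagonal fun i => Polynomial.eval (d i) (p + q))
        = Matrix.diagonal (fun i => p.eval (d i)) + Matrix.diagonal (fun i => q.eval (d i)) := by
      rw [Matrix.diagonal_add]
      exact diagonal_congr fun i => by simp
    rw [map_add, hp, hq, hD, Matrix.mul_add, Matrix.add_mul]
  | monomial k a =>
    rw [Polynomial.aeval_monomial, hpow]
    have hD : (Matrix.diagonal fun i => Polynomial.eval (d i) ((Polynomial.monomial k) a))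
        = a • Matrix.diagonal (fun i => d i ^ k) := by
      rw [← Matrix.diagonal_smul]
      exact diagonal_congr fun i => by simp [Polynomial.eval_monomial]
    rw [hD, Algebra.algebraMap_eq_smul_one, smul_mul_assoc, one_mul,
      mul_smul_comm, smul_mul_assoc]

lemma interpolate_eval_complex (s : Finset ℝ) (f : ℝ → ℝ) {x : ℝ} (hx : x ∈ s) :
    ((Lagrange.interpolate s id f).map (algebraMap ℝ ℂ)).eval (x : ℂ) = ((f x : ℝ) : ℂ) := by
  have h : (Lagrange.interpolate s id f).eval x = f x :=
    Lagrange.eval_interpolate_at_node f Function.injective_id.injOn hx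
  rw [show ((x : ℝ) : ℂ) = algebraMap ℝ ℂ x from rfl, Polynomial.eval_map,
    Polynomial.eval₂_at_apply, h]
  rfl

lemma coeff_zero_interp {s : Finset ℝ} (f : ℝ → ℝ) (h0 : (0 : ℝ) ∈ s) (hf : f 0 = 0) :
    ((Lagrange.interpolate s id f).map (algebraMap ℝ ℂ)).coeff 0 = 0 := by
  have h : (Lagrange.interpolate s id f).eval 0 = f 0 :=
    Lagrange.eval_interpolate_at_node f Function.injective_id.injOn h0
  rw [Polynomial.coeff_map, Polynomial.coeff_zero_eq_eval_zero, h, hf, map_zero]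

lemma matFun_eq_aeval {M : Matrix n n ℂ} (hM : M.IsHermitian) (f : ℝ → ℝ)
    (s : Finset ℝ) (hs : ∀ i, hM.eigenvalues i ∈ s) :
    matFun M f = Polynomial.aeval M ((Lagrange.interpolate s id f).map (algebraMap ℝ ℂ)) := by
  conv_rhs => rw [show M = (hM.eigenvectorUnitary : Matrix n n ℂ) * Matrix.diagonal (fun i => ((hM.eigenvalues i : ℝ) : ℂ)) * star (hM.eigenvectorUnitary : Matrix n n ℂ) from hM.spectral_theorem]
  rw [aeval_unitary_conj_s14 _ hM.eigenvectorUnitary.2, matFun, dif_pos hM]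
  congr 1
  congr 1
  exact diagonal_congr fun i => (interpolate_eval_complex s f (hs i)).symm

lemma isHermitian_of_decomp (U : Matrix n n ℂ) (ν : n → ℝ) :
    (U * Matrix.diagonal (fun i => ((ν i : ℝ) : ℂ)) * star U).IsHermitian := by
  have hD : (Matrix.diagonal fun i => ((ν i : ℝ) : ℂ))ᴴ
      = Matrix.diagonal fun i => ((ν i : ℝ) : ℂ) := by
    rw [Matrix.diagonal_conjTranspose]
    exact diagonal_congr fun i => by
      simp [Pi.star_apply, Complex.star_def, Complex.conj_ofReal]
  show _ᴴ = _
  rw [Matrix.conjTranspose_mul, Matrix.conjTranspose_mul, hD,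
    Matrix.star_eq_conjTranspose, Matrix.conjTranspose_conjTranspose, Matrix.mul_assoc]

/-- `matFun` is independent of the particular unitary diagonalization. -/
lemma matFun_of_decomp (U : Matrix n n ℂ) (hU : U ∈ Matrix.unitaryGroup n ℂ) (ν : n → ℝ)
    {M : Matrix n n ℂ}
    (hdec : M = U * Matrix.diagonal (fun i => ((ν i : ℝ) : ℂ)) * star U) (f : ℝ → ℝ) :
    matFun M f = U * Matrix.diagonal (fun i => ((f (ν i) : ℝ) : ℂ)) * star U := by
  classical
  have hM : M.IsHermitian := hdec ▸ isHermitian_of_decomp U ν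
  set s : Finset ℝ :=
    (Finset.image hM.eigenvalues Finset.univ) ∪ (Finset.image ν Finset.univ) with hsdef
  have h1 := matFun_eq_aeval hM f s
    (fun i => Finset.mem_union_left _ (Finset.mem_image_of_mem _ (Finset.mem_univ i)))
  rw [h1, hdec, aeval_unitary_conj_s14 U hU]
  congr 1
  congr 1
  exact diagonal_congr fun i => interpolate_eval_complex s f
    (Finset.mem_union_right _ (Finset.mem_image_of_mem _ (Finset.mem_univ i)))

lemma pow_add_of_orth {X Y : Matrix n n ℂ} (hXY : X * Y = 0) (hYX : Y * X = 0) :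
    ∀ m : ℕ, (X + Y) ^ (m + 1) = X ^ (m + 1) + Y ^ (m + 1) := by
  intro m
  induction m with
  | zero => simp
  | succ m ih =>
    have h1 : X ^ (m + 1) * Y = 0 := by
      rw [pow_succ, Matrix.mul_assoc, hXY, Matrix.mul_zero]
    have h2 : Y ^ (m + 1) * X = 0 := by
      rw [pow_succ, Matrix.mul_assoc, hYX, Matrix.mul_zero]
    rw [pow_succ, ih, Matrix.add_mul, Matrix.mul_add, Matrix.mul_add, h1, h2,
      ← pow_succ, ← pow_succ]
    abel

lemma aeval_add_of_orth {X Y : Matrix n n ℂ} (hXY : X * Y = 0) (hYX : Y * X = 0)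
    (q : ℂ[X]) (hq : q.coeff 0 = 0) :
    Polynomial.aeval (X + Y) q = Polynomial.aeval X q + Polynomial.aeval Y q := by
  have hdeg : q.natDegree < q.natDegree + 1 := Nat.lt_succ_self _
  rw [Polynomial.aeval_eq_sum_range' hdeg, Polynomial.aeval_eq_sum_range' hdeg,
    Polynomial.aeval_eq_sum_range' hdeg, ← Finset.sum_add_distrib]
  refine Finset.sum_congr rfl fun i _ => ?_
  cases i with
  | zero => simp [hq]
  | succ m => rw [pow_add_of_orth hXY hYX m, smul_add]

lemma mul_aeval_absorb {Q M : Matrix n n ℂ} (hQM : Q * M = M)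
    (q : ℂ[X]) (hq : q.coeff 0 = 0) :
    Q * Polynomial.aeval M q = Polynomial.aeval M q := by
  rw [Polynomial.aeval_eq_sum_range' (Nat.lt_succ_self q.natDegree), Finset.mul_sum]
  refine Finset.sum_congr rfl fun i _ => ?_
  cases i with
  | zero => simp [hq]
  | succ m =>
    rw [mul_smul_comm]
    congr 1
    rw [pow_succ', ← Matrix.mul_assoc, hQM]

lemma aeval_mul_absorb {Q M : Matrix n n ℂ} (hMQ : M * Q = M)
    (q : ℂ[X]) (hq : q.coeff 0 = 0) :
    Polynomial.aeval M q * Q = Polynomial.aeval M q := by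
  rw [Polynomial.aeval_eq_sum_range' (Nat.lt_succ_self q.natDegree), Finset.sum_mul]
  refine Finset.sum_congr rfl fun i _ => ?_
  cases i with
  | zero => simp [hq]
  | succ m =>
    rw [smul_mul_assoc]
    congr 1
    rw [pow_succ, Matrix.mul_assoc, hMQ]

lemma matFun_isHermitian {M : Matrix n n ℂ} (hM : M.IsHermitian) (f : ℝ → ℝ) :
    (matFun M f).IsHermitian := by
  rw [matFun, dif_pos hM]
  exact isHermitian_of_decomp _ _

lemma matFun_posSemidef {M : Matrix n n ℂ} (hM : M.PosSemidef) (f : ℝ → ℝ)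
    (hf : ∀ x, 0 ≤ x → 0 ≤ f x) : (matFun M f).PosSemidef := by
  rw [matFun, dif_pos hM.1]
  have hD : (Matrix.diagonal (fun i => ((f (hM.1.eigenvalues i) : ℝ) : ℂ))).PosSemidef :=
    Matrix.posSemidef_diagonal_iff.mpr fun i =>
      Complex.zero_le_real.mpr (hf _ (hM.eigenvalues_nonneg i))
  have := hD.mul_mul_conjTranspose_same (hM.1.eigenvectorUnitary : Matrix n n ℂ)
  rwa [← Matrix.star_eq_conjTranspose] at this

lemma matFun_add_of_orth {X Y : Matrix n n ℂ} (hX : X.IsHermitian) (hY : Y.IsHermitian)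
    (hXY : X * Y = 0) (hYX : Y * X = 0) (f : ℝ → ℝ) (hf : f 0 = 0) :
    matFun (X + Y) f = matFun X f + matFun Y f := by
  classical
  have hXYh : (X + Y).IsHermitian := hX.add hY
  set s : Finset ℝ :=
    ((Finset.image hX.eigenvalues Finset.univ ∪ Finset.image hY.eigenvalues Finset.univ)
      ∪ Finset.image hXYh.eigenvalues Finset.univ) ∪ {0} with hsdef
  have h0 : (0 : ℝ) ∈ s := Finset.mem_union_right _ (Finset.mem_singleton_self 0)
  have hq0 := coeff_zero_interp (s := s) f h0 hf
  have hmemX : ∀ i, hX.eigenvalues i ∈ s := fun i =>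
    Finset.mem_union_left _ (Finset.mem_union_left _ (Finset.mem_union_left _
      (Finset.mem_image_of_mem _ (Finset.mem_univ i))))
  have hmemY : ∀ i, hY.eigenvalues i ∈ s := fun i =>
    Finset.mem_union_left _ (Finset.mem_union_left _ (Finset.mem_union_right _
      (Finset.mem_image_of_mem _ (Finset.mem_univ i))))
  have hmemXY : ∀ i, hXYh.eigenvalues i ∈ s := fun i =>
    Finset.mem_union_left _ (Finset.mem_union_right _
      (Finset.mem_image_of_mem _ (Finset.mem_univ i)))
  rw [matFun_eq_aeval hXYh f s hmemXY, matFun_eq_aeval hX f s hmemX,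
    matFun_eq_aeval hY f s hmemY]
  exact aeval_add_of_orth hXY hYX _ hq0

lemma matFun_zero (f : ℝ → ℝ) (hf : f 0 = 0) : matFun (0 : Matrix n n ℂ) f = 0 := by
  classical
  have h0 : (0 : Matrix n n ℂ).IsHermitian := Matrix.isHermitian_zero
  set s : Finset ℝ := Finset.image h0.eigenvalues Finset.univ ∪ {0} with hsdef
  have hmem : ∀ i, h0.eigenvalues i ∈ s := fun i =>
    Finset.mem_union_left _ (Finset.mem_image_of_mem _ (Finset.mem_univ i))
  have hq0 := coeff_zero_interp (s := s) f
    (Finset.mem_union_right _ (Finset.mem_singleton_self 0)) hf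
  rw [matFun_eq_aeval h0 f s hmem]
  have := mul_aeval_absorb (Q := (0 : Matrix n n ℂ)) (M := (0 : Matrix n n ℂ))
    (by rw [Matrix.zero_mul]) _ hq0
  rw [Matrix.zero_mul] at this
  exact this.symm

lemma matFun_absorb_left {Q M : Matrix n n ℂ} (hM : M.IsHermitian) (hQM : Q * M = M)
    {f : ℝ → ℝ} (hf : f 0 = 0) : Q * matFun M f = matFun M f := by
  classical
  set s : Finset ℝ := Finset.image hM.eigenvalues Finset.univ ∪ {0} with hsdef
  have hmem : ∀ i, hM.eigenvalues i ∈ s := fun i =>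
    Finset.mem_union_left _ (Finset.mem_image_of_mem _ (Finset.mem_univ i))
  have hq0 := coeff_zero_interp (s := s) f
    (Finset.mem_union_right _ (Finset.mem_singleton_self 0)) hf
  rw [matFun_eq_aeval hM f s hmem]
  exact mul_aeval_absorb hQM _ hq0

lemma matFun_absorb_right {Q M : Matrix n n ℂ} (hM : M.IsHermitian) (hMQ : M * Q = M)
    {f : ℝ → ℝ} (hf : f 0 = 0) : matFun M f * Q = matFun M f := by
  classical
  set s : Finset ℝ := Finset.image hM.eigenvalues Finset.univ ∪ {0} with hsdef
  have hmem : ∀ i, hM.eigenvalues i ∈ s := fun i =>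
    Finset.mem_union_left _ (Finset.mem_image_of_mem _ (Finset.mem_univ i))
  have hq0 := coeff_zero_interp (s := s) f
    (Finset.mem_union_right _ (Finset.mem_singleton_self 0)) hf
  rw [matFun_eq_aeval hM f s hmem]
  exact aeval_mul_absorb hMQ _ hq0

lemma matFun_sum {ι : Type*} (f : ℝ → ℝ) (hf : f 0 = 0) (s : Finset ι)
    (X : ι → Matrix n n ℂ) (hherm : ∀ i ∈ s, (X i).IsHermitian)
    (horth : ∀ i ∈ s, ∀ j ∈ s, i ≠ j → X i * X j = 0) :
    matFun (∑ i ∈ s, X i) f = ∑ i ∈ s, matFun (X i) f := by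
  classical
  induction s using Finset.induction_on with
  | empty => simpa using matFun_zero f hf
  | @insert a t hat ih =>
    have hherm_t : ∀ i ∈ t, (X i).IsHermitian := fun i hi =>
      hherm i (Finset.mem_insert_of_mem hi)
    have horth_t : ∀ i ∈ t, ∀ j ∈ t, i ≠ j → X i * X j = 0 := fun i hi j hj hij =>
      horth i (Finset.mem_insert_of_mem hi) j (Finset.mem_insert_of_mem hj) hij
    have hXa : (X a).IsHermitian := hherm a (Finset.mem_insert_self a t)
    have hsum : (∑ i ∈ t, X i).IsHermitian := by
      show _ᴴ = _
      rw [Matrix.conjTranspose_sum]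
      exact Finset.sum_congr rfl fun i hi => hherm_t i hi
    have h1 : X a * (∑ i ∈ t, X i) = 0 := by
      rw [Finset.mul_sum]
      exact Finset.sum_eq_zero fun j hj =>
        horth a (Finset.mem_insert_self a t) j (Finset.mem_insert_of_mem hj)
          (fun h => hat (h ▸ hj))
    have h2 : (∑ i ∈ t, X i) * X a = 0 := by
      rw [Finset.sum_mul]
      exact Finset.sum_eq_zero fun j hj =>
        horth j (Finset.mem_insert_of_mem hj) a (Finset.mem_insert_self a t)
          (fun h => hat (h ▸ hj))
    rw [Finset.sum_insert hat, Finset.sum_insert hat,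
      matFun_add_of_orth hXa hsum h1 h2 f hf, ih hherm_t horth_t]

lemma mpow_smul {M : Matrix n n ℂ} (hM : M.PosSemidef) {c t : ℝ} (hc : 0 ≤ c) (ht : t ≠ 0) :
    mpow ((c : ℂ) • M) t = ((c ^ t : ℝ) : ℂ) • mpow M t := by
  have hh := hM.1
  set U : Matrix n n ℂ := (hh.eigenvectorUnitary : Matrix n n ℂ) with hUdef
  have hst : M = U * Matrix.diagonal (fun i => ((hh.eigenvalues i : ℝ) : ℂ)) * star U :=
    hh.spectral_theorem
  have hD : Matrix.diagonal (fun i => ((c * hh.eigenvalues i : ℝ) : ℂ))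
      = (c : ℂ) • Matrix.diagonal (fun i => ((hh.eigenvalues i : ℝ) : ℂ)) := by
    rw [← Matrix.diagonal_smul]
    exact diagonal_congr fun i => by push_cast; simp
  have hdec : (c : ℂ) • M
      = U * Matrix.diagonal (fun i => ((c * hh.eigenvalues i : ℝ) : ℂ)) * star U := by
    rw [hD, mul_smul_comm, smul_mul_assoc, ← hst]
  rw [mpow, mpow, matFun_of_decomp U hh.eigenvectorUnitary.2 _ hdec _,
    matFun_of_decomp U hh.eigenvectorUnitary.2 _ hst _]
  have hDf : (Matrix.diagonal fun i =>
        (((if c * hh.eigenvalues i = 0 then 0 else (c * hh.eigenvalues i) ^ t : ℝ)) : ℂ))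
      = ((c ^ t : ℝ) : ℂ) • Matrix.diagonal (fun i =>
        (((if hh.eigenvalues i = 0 then 0 else (hh.eigenvalues i) ^ t : ℝ)) : ℂ)) := by
    rw [← Matrix.diagonal_smul]
    refine diagonal_congr fun i => ?_
    have hμ : 0 ≤ hh.eigenvalues i := hM.eigenvalues_nonneg i
    have hreal : (if c * hh.eigenvalues i = 0 then (0:ℝ) else (c * hh.eigenvalues i) ^ t)
        = c ^ t * (if hh.eigenvalues i = 0 then (0:ℝ) else (hh.eigenvalues i) ^ t) := by
      rcases eq_or_lt_of_le hc with hc0 | hcpos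
      · rw [← hc0]
        simp [Real.zero_rpow ht]
      · rcases eq_or_lt_of_le hμ with hμ0 | hμpos
        · rw [← hμ0]
          simp
        · have hne : c * hh.eigenvalues i ≠ 0 := by positivity
          rw [if_neg hne, if_neg (ne_of_gt hμpos), Real.mul_rpow hc hμ]
    rw [hreal]
    simp only [Pi.smul_apply, smul_eq_mul]
    push_cast
    ring
  rw [hDf, mul_smul_comm, smul_mul_assoc]

end Aux

section PtrAux

variable {A B : Type*} [Fintype A] [Fintype B]

lemma ptrA_sum {ι : Type*} (s : Finset ι) (M : ι → Matrix (A × B) (A × B) ℂ) :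
    ptrA (∑ i ∈ s, M i) = ∑ i ∈ s, ptrA (M i) := by
  ext b b'
  simp only [ptrA, Matrix.of_apply, Matrix.sum_apply]
  exact Finset.sum_comm

lemma ptrA_smul (z : ℂ) (M : Matrix (A × B) (A × B) ℂ) :
    ptrA (z • M) = z • ptrA M := by
  ext b b'
  simp [ptrA, Finset.mul_sum]

lemma ptrA_isHermitian {M : Matrix (A × B) (A × B) ℂ} (hM : M.IsHermitian) :
    (ptrA M).IsHermitian := by
  show _ᴴ = _
  ext b b'
  simp only [Matrix.conjTranspose_apply, ptrA, Matrix.of_apply, star_sum]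
  exact Finset.sum_congr rfl fun a _ => hM.apply _ _

lemma ptrA_posSemidef_s14 [DecidableEq A] {M : Matrix (A × B) (A × B) ℂ} (hM : M.PosSemidef) :
    (ptrA M).PosSemidef := by
  refine Matrix.PosSemidef.of_dotProduct_mulVec_nonneg (ptrA_isHermitian hM.1) fun x => ?_
  have inner : ∀ (a a1 : A) (b : B),
      (∑ a2 : A, ∑ b' : B, M (a1, b) (a2, b') * (if a2 = a then x b' else 0))
        = ∑ b' : B, M (a1, b) (a, b') * x b' := by
    intro a a1 b
    rw [Finset.sum_comm]
    refine Finset.sum_congr rfl fun b' _ => ?_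
    simp [mul_ite, mul_zero, Finset.sum_ite_eq']
  have hR : ∀ a : A, (star fun p : A × B => if p.1 = a then x p.2 else 0) ⬝ᵥ
      M *ᵥ (fun p : A × B => if p.1 = a then x p.2 else 0)
      = ∑ b : B, ∑ b' : B, star (x b) * M (a, b) (a, b') * x b' := by
    intro a
    simp only [dotProduct, Matrix.mulVec, Pi.star_apply, Fintype.sum_prod_type]
    rw [Finset.sum_comm]
    refine Finset.sum_congr rfl fun b _ => ?_
    have hone : ∀ a1 : A, star (if a1 = a then x b else 0) *
        (∑ a2 : A, ∑ b' : B, M (a1, b) (a2, b') * (if a2 = a then x b' else 0))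
        = if a1 = a then ∑ b' : B, star (x b) * M (a, b) (a, b') * x b' else 0 := by
      intro a1
      by_cases h : a1 = a
      · subst h
        rw [if_pos rfl, if_pos rfl, inner a1 a1 b, Finset.mul_sum]
        exact Finset.sum_congr rfl fun b' _ => by ring
      · simp [h]
    simp only [hone]
    simp
  have hL : star x ⬝ᵥ (ptrA M) *ᵥ x
      = ∑ b : B, ∑ b' : B, ∑ a : A, star (x b) * M (a, b) (a, b') * x b' := by
    simp only [dotProduct, Matrix.mulVec, ptrA, Matrix.of_apply, Pi.star_apply]
    refine Finset.sum_congr rfl fun b _ => ?_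
    rw [Finset.mul_sum]
    refine Finset.sum_congr rfl fun b' _ => ?_
    rw [Finset.sum_mul, Finset.mul_sum]
    exact Finset.sum_congr rfl fun a _ => by ring
  have hswap : (∑ b : B, ∑ b' : B, ∑ a : A, star (x b) * M (a, b) (a, b') * x b')
      = ∑ a : A, ∑ b : B, ∑ b' : B, star (x b) * M (a, b) (a, b') * x b' := by
    have h1 : ∀ b : B, (∑ b' : B, ∑ a : A, star (x b) * M (a, b) (a, b') * x b')
        = ∑ a : A, ∑ b' : B, star (x b) * M (a, b) (a, b') * x b' := fun b =>
      Finset.sum_comm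
    simp only [h1]
    exact Finset.sum_comm
  rw [hL, hswap]
  have : (∑ a : A, ∑ b : B, ∑ b' : B, star (x b) * M (a, b) (a, b') * x b')
      = ∑ a : A, (star fun p : A × B => if p.1 = a then x p.2 else 0) ⬝ᵥ
          M *ᵥ (fun p : A × B => if p.1 = a then x p.2 else 0) :=
    Finset.sum_congr rfl fun a _ => (hR a).symm
  rw [this]
  exact Finset.sum_nonneg fun a _ => hM.dotProduct_mulVec_nonneg _

open scoped Kronecker in
lemma ptrA_kron_mul [DecidableEq A] (Pm : Matrix B B ℂ) (N : Matrix (A × B) (A × B) ℂ) :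
    ptrA (((1 : Matrix A A ℂ) ⊗ₖ Pm) * N) = Pm * ptrA N := by
  ext b b'
  have hentry : ∀ a : A, ((((1 : Matrix A A ℂ) ⊗ₖ Pm) * N)) (a, b) (a, b')
      = ∑ c : B, Pm b c * N (a, c) (a, b') := by
    intro a
    rw [Matrix.mul_apply, Fintype.sum_prod_type, Finset.sum_comm]
    refine Finset.sum_congr rfl fun c _ => ?_
    simp [Matrix.one_apply, ite_mul, zero_mul, Finset.sum_ite_eq]
  show (∑ a : A, ((((1 : Matrix A A ℂ) ⊗ₖ Pm) * N)) (a, b) (a, b')) = (Pm * ptrA N) b b'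
  simp only [hentry]
  rw [Finset.sum_comm, Matrix.mul_apply]
  exact Finset.sum_congr rfl fun c _ => (Finset.mul_sum _ _ _).symm

open scoped Kronecker in
lemma ptrA_mul_kron [DecidableEq A] (Pm : Matrix B B ℂ) (N : Matrix (A × B) (A × B) ℂ) :
    ptrA (N * ((1 : Matrix A A ℂ) ⊗ₖ Pm)) = ptrA N * Pm := by
  ext b b'
  have hentry : ∀ a : A, ((N * ((1 : Matrix A A ℂ) ⊗ₖ Pm))) (a, b) (a, b')
      = ∑ c : B, N (a, b) (a, c) * Pm c b' := by
    intro a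
    rw [Matrix.mul_apply, Fintype.sum_prod_type, Finset.sum_comm]
    refine Finset.sum_congr rfl fun c _ => ?_
    simp [Matrix.one_apply, ite_mul, zero_mul, mul_ite, mul_zero, mul_assoc,
      Finset.sum_ite_eq']
  show (∑ a : A, ((N * ((1 : Matrix A A ℂ) ⊗ₖ Pm))) (a, b) (a, b')) = (ptrA N * Pm) b b'
  simp only [hentry]
  rw [Finset.sum_comm, Matrix.mul_apply]
  exact Finset.sum_congr rfl fun c _ => (Finset.sum_mul _ _ _).symm

lemma trR_sum {ι n : Type*} [Fintype n] (s : Finset ι) (M : ι → Matrix n n ℂ) :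
    trR (∑ i ∈ s, M i) = ∑ i ∈ s, trR (M i) := by
  simp [trR, Matrix.trace_sum, Complex.re_sum]

lemma trR_real_smul {n : Type*} [Fintype n] (r : ℝ) (M : Matrix n n ℂ) :
    trR ((r : ℂ) • M) = r * trR M := by
  simp [trR, Matrix.trace_smul, smul_eq_mul, Complex.re_ofReal_mul]

end PtrAux

/-- Orthogonal additivity of the Sibson functional:
if the density matrices `ρ i` are supported on pairwise orthogonal
projections `1_A ⊗ P i` of the `B` system, then
`Tr[(Tr_A((∑ c_i ρ_i)^λ))^{1/λ}] = ∑ c_i · Tr[(Tr_A(ρ_i^λ))^{1/λ}]`. -/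
theorem sibson_orthogonal_additivity
    {A B : Type*} [Fintype A] [Fintype B] [DecidableEq A] [DecidableEq B]
    [Nonempty A] [Nonempty B]
    (lam : ℝ) (hlam : 1 < lam)
    {I : Type*} [Fintype I]
    (c : I → ℝ) (hc : ∀ i, 0 ≤ c i)
    (ρ : I → Matrix (A × B) (A × B) ℂ)
    (hρ : ∀ i, (ρ i).PosSemidef ∧ (ρ i).trace = 1)
    (P : I → Matrix B B ℂ)
    (hPherm : ∀ i, (P i).IsHermitian) (hPproj : ∀ i, P i * P i = P i)
    (hPorth : ∀ i j, i ≠ j → P i * P j = 0)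
    (hsupp : ∀ i, ((1 : Matrix A A ℂ) ⊗ₖ P i) * ρ i * ((1 : Matrix A A ℂ) ⊗ₖ P i) = ρ i) :
    trR (mpow (ptrA (mpow (∑ i, ((c i : ℝ) : ℂ) • ρ i) lam)) (1 / lam)) =
      ∑ i, c i * trR (mpow (ptrA (mpow (ρ i) lam)) (1 / lam)) := by
  classical
  have hlam0 : lam ≠ 0 := ne_of_gt (lt_trans one_pos hlam)
  have hinv0 : (1 : ℝ) / lam ≠ 0 := one_div_ne_zero hlam0
  have hf1 : (fun x : ℝ => if x = 0 then 0 else x ^ lam) 0 = 0 := if_pos rfl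
  have hf2 : (fun x : ℝ => if x = 0 then 0 else x ^ ((1:ℝ)/lam)) 0 = 0 := if_pos rfl
  set Q : I → Matrix (A × B) (A × B) ℂ := fun i => (1 : Matrix A A ℂ) ⊗ₖ P i with hQdef
  have hQproj : ∀ i, Q i * Q i = Q i := fun i => by
    rw [hQdef]
    dsimp only
    rw [← Matrix.mul_kronecker_mul, Matrix.one_mul, hPproj i]
  have hQorth : ∀ i j, i ≠ j → Q i * Q j = 0 := fun i j h => by
    rw [hQdef]
    dsimp only
    rw [← Matrix.mul_kronecker_mul, Matrix.one_mul, hPorth i j h, Matrix.kronecker_zero]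
  have hQρ : ∀ i, Q i * ρ i = ρ i := fun i => by
    conv_lhs => rw [← hsupp i]
    rw [← Matrix.mul_assoc, ← Matrix.mul_assoc, hQproj i]
    exact hsupp i
  have hρQ : ∀ i, ρ i * Q i = ρ i := fun i => by
    conv_lhs => rw [← hsupp i]
    rw [Matrix.mul_assoc, hQproj i]
    exact hsupp i
  have hherm : ∀ i, (((c i : ℝ) : ℂ) • ρ i).IsHermitian := fun i => by
    show _ᴴ = _
    rw [Matrix.conjTranspose_smul, (hρ i).1.1]
    congr 1
    simp [Complex.star_def, Complex.conj_ofReal]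
  have horthρ : ∀ i j, i ≠ j → ρ i * ρ j = 0 := fun i j h => by
    conv_lhs => rw [← hρQ i, ← hQρ j]
    rw [Matrix.mul_assoc, ← Matrix.mul_assoc (Q i), hQorth i j h, Matrix.zero_mul,
      Matrix.mul_zero]
  have horth : ∀ i j, i ≠ j →
      (((c i : ℝ) : ℂ) • ρ i) * (((c j : ℝ) : ℂ) • ρ j) = 0 := fun i j h => by
    rw [smul_mul_assoc, mul_smul_comm, horthρ i j h, smul_zero, smul_zero]
  -- Step 1: mpow of the sum splits
  have step1 : mpow (∑ i, ((c i : ℝ) : ℂ) • ρ i) lam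
      = ∑ i, mpow (((c i : ℝ) : ℂ) • ρ i) lam := by
    simp only [mpow]
    exact matFun_sum _ hf1 Finset.univ _ (fun i _ => hherm i) (fun i _ j _ h => horth i j h)
  -- Supports of the summands' powers
  have hQsmul : ∀ i, Q i * (((c i : ℝ) : ℂ) • ρ i) = ((c i : ℝ) : ℂ) • ρ i := fun i => by
    rw [mul_smul_comm, hQρ i]
  have hsmulQ : ∀ i, (((c i : ℝ) : ℂ) • ρ i) * Q i = ((c i : ℝ) : ℂ) • ρ i := fun i => by
    rw [smul_mul_assoc, hρQ i]
  have habsL : ∀ i, Q i * mpow (((c i : ℝ) : ℂ) • ρ i) lam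
      = mpow (((c i : ℝ) : ℂ) • ρ i) lam := fun i =>
    matFun_absorb_left (hherm i) (hQsmul i) hf1
  have habsR : ∀ i, mpow (((c i : ℝ) : ℂ) • ρ i) lam * Q i
      = mpow (((c i : ℝ) : ℂ) • ρ i) lam := fun i =>
    matFun_absorb_right (hherm i) (hsmulQ i) hf1
  set S : I → Matrix B B ℂ := fun i => ptrA (mpow (((c i : ℝ) : ℂ) • ρ i) lam) with hSdef
  have hSP : ∀ i, P i * S i = S i := fun i => by
    rw [hSdef]
    have := ptrA_kron_mul (A := A) (P i) (mpow (((c i : ℝ) : ℂ) • ρ i) lam)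
    rw [← this, habsL i]
  have hPS : ∀ i, S i * P i = S i := fun i => by
    rw [hSdef]
    have := ptrA_mul_kron (A := A) (P i) (mpow (((c i : ℝ) : ℂ) • ρ i) lam)
    rw [← this, habsR i]
  have hSherm : ∀ i, (S i).IsHermitian := fun i =>
    ptrA_isHermitian (matFun_isHermitian (hherm i) _)
  have hSorth : ∀ i j, i ≠ j → S i * S j = 0 := fun i j h => by
    conv_lhs => rw [← hPS i, ← hSP j]
    rw [Matrix.mul_assoc, ← Matrix.mul_assoc (P i), hPorth i j h, Matrix.zero_mul,
      Matrix.mul_zero]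
  -- Step 2 & 3
  have step2 : ptrA (mpow (∑ i, ((c i : ℝ) : ℂ) • ρ i) lam) = ∑ i, S i := by
    rw [step1, ptrA_sum]
  have step3 : mpow (∑ i, S i) ((1:ℝ)/lam) = ∑ i, mpow (S i) ((1:ℝ)/lam) := by
    simp only [mpow]
    exact matFun_sum _ hf2 Finset.univ _ (fun i _ => hSherm i) (fun i _ j _ h => hSorth i j h)
  rw [step2, step3, trR_sum]
  refine Finset.sum_congr rfl fun i _ => ?_
  -- per-index computation
  have h1 : mpow (((c i : ℝ) : ℂ) • ρ i) lam
      = ((c i ^ lam : ℝ) : ℂ) • mpow (ρ i) lam := mpow_smul (hρ i).1 (hc i) hlam0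
  have hT : (ptrA (mpow (ρ i) lam)).PosSemidef := by
    refine ptrA_posSemidef_s14 (matFun_posSemidef (hρ i).1 _ fun x hx => ?_)
    split_ifs with h
    · exact le_refl 0
    · exact Real.rpow_nonneg hx lam
  have h2 : S i = ((c i ^ lam : ℝ) : ℂ) • ptrA (mpow (ρ i) lam) := by
    simp only [hSdef]
    rw [h1, ptrA_smul]
  have h3 : mpow (S i) ((1:ℝ)/lam)
      = (((c i ^ lam) ^ ((1:ℝ)/lam) : ℝ) : ℂ) • mpow (ptrA (mpow (ρ i) lam)) ((1:ℝ)/lam) := by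
    rw [h2]
    exact mpow_smul hT (Real.rpow_nonneg (hc i) lam) hinv0
  have h4 : (c i ^ lam) ^ ((1:ℝ)/lam) = c i := by
    rw [← Real.rpow_mul (hc i), mul_one_div_cancel hlam0, Real.rpow_one]
  rw [h3, h4, trR_real_smul]
end
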